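/- arXiv:1002.3065 — 9 statements merged into one kernel-verified Lean document; each statement's English description precedes it below -/
import Mathlib

section
/- Let g : [0,1] → ℝ be a C² function such that |g′(z)| ≥ c₁ > 0 for all z ∈ [0,1], and such that g″ changes sign at most twice on [0,1]: there exist 0 ≤ z₋ ≤ z₊ ≤ 1 with either (g″ ≥ 0 on [z₋, z₊] and g″ ≤ 0 on [0, z₋] ∪ [z₊, 1]) or the same with the inequalities reversed. Let G : [0,1] → ℝ be a C¹ function such that |G(z)| ≥ c₂ > 0 for all z ∈ [0,1], and such that G′ changes sign at most twice on [0,1] (in the same sense). Then | ∫₀¹ e^{2πi g(z)} / G(z) dz | ≤ 14/(π c₁ c₂). -/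
open Real Set

/-- `f` changes sign at most twice on `[0,1]`: there are `0 ≤ z₋ ≤ z₊ ≤ 1` such that either
`f ≥ 0` on `[z₋, z₊]` and `f ≤ 0` on `[0, z₋] ∪ [z₊, 1]`, or the same with inequalities
reversed. -/
def ChangesSignAtMostTwice (f : ℝ → ℝ) : Prop :=
  ∃ zm zp : ℝ, 0 ≤ zm ∧ zm ≤ zp ∧ zp ≤ 1 ∧
    (((∀ z ∈ Set.Icc zm zp, 0 ≤ f z) ∧
        (∀ z ∈ Set.Icc (0:ℝ) zm ∪ Set.Icc zp 1, f z ≤ 0)) ∨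
      ((∀ z ∈ Set.Icc zm zp, f z ≤ 0) ∧
        (∀ z ∈ Set.Icc (0:ℝ) zm ∪ Set.Icc zp 1, 0 ≤ f z)))



-- helper: ofReal comp for HasDerivWithinAt
lemma myOfRealComp {f : ℝ → ℝ} {u z : ℝ} {s : Set ℝ} (hf : HasDerivWithinAt f u s z) :
    HasDerivWithinAt (fun y : ℝ => ((f y : ℝ) : ℂ)) (u : ℂ) s z := by
  exact hf.ofReal_comp

-- FTC on Icc with HasDerivWithinAt
lemma myFTC {E : Type*} [NormedAddCommGroup E] [NormedSpace ℝ E] [CompleteSpace E] {f f' : ℝ → E} {a b : ℝ}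
    (hab : a ≤ b)
    (hd : ∀ x ∈ Icc a b, HasDerivWithinAt f (f' x) (Icc a b) x)
    (hc : ContinuousOn f' (Icc a b)) :
    ∫ y in a..b, f' y = f b - f a := by
  apply intervalIntegral.integral_eq_sub_of_hasDeriv_right_of_le hab
  · exact fun x hx => (hd x hx).continuousWithinAt
  · intro x hx
    exact ((hd x (Ioo_subset_Icc_self hx)).hasDerivAt
      (Icc_mem_nhds hx.1 hx.2)).hasDerivWithinAt
  · exact hc.intervalIntegrable_of_Icc hab

-- sign-constant piece bound
lemma myPiece {p p' : ℝ → ℝ} {a b M : ℝ} (hab : a ≤ b) (hsub : Icc a b ⊆ Icc 0 1)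
    (hd : ∀ x ∈ Icc (0:ℝ) 1, HasDerivWithinAt p (p' x) (Icc 0 1) x)
    (hc : ContinuousOn p' (Icc 0 1))
    (hM : ∀ x ∈ Icc (0:ℝ) 1, |p x| ≤ M)
    (hsign : (∀ x ∈ Icc a b, 0 ≤ p' x) ∨ (∀ x ∈ Icc a b, p' x ≤ 0)) :
    ∫ x in a..b, |p' x| ≤ 2 * M := by
  have hd' : ∀ x ∈ Icc a b, HasDerivWithinAt p (p' x) (Icc a b) x :=
    fun x hx => (hd x (hsub hx)).mono hsub
  have hftc : ∫ x in a..b, p' x = p b - p a := myFTC hab hd' (hc.mono hsub)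
  have hpa : |p a| ≤ M := hM a (hsub (left_mem_Icc.2 hab))
  have hpb : |p b| ≤ M := hM b (hsub (right_mem_Icc.2 hab))
  rcases hsign with h | h
  · have : ∫ x in a..b, |p' x| = ∫ x in a..b, p' x := by
      apply intervalIntegral.integral_congr
      intro x hx
      rw [uIcc_of_le hab] at hx
      exact abs_of_nonneg (h x hx)
    rw [this, hftc]
    have := abs_le.mp hpa; have := abs_le.mp hpb
    linarith
  · have : ∫ x in a..b, |p' x| = ∫ x in a..b, -p' x := by
      apply intervalIntegral.integral_congr
      intro x hx
      rw [uIcc_of_le hab] at hx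
      exact abs_of_nonpos (h x hx)
    rw [this, intervalIntegral.integral_neg, hftc]
    have := abs_le.mp hpa; have := abs_le.mp hpb
    linarith


-- total variation bound from at most two sign changes
lemma myTV {p p' : ℝ → ℝ} {M : ℝ}
    (hd : ∀ x ∈ Icc (0:ℝ) 1, HasDerivWithinAt p (p' x) (Icc 0 1) x)
    (hc : ContinuousOn p' (Icc 0 1))
    (hM : ∀ x ∈ Icc (0:ℝ) 1, |p x| ≤ M)
    (hsign : ChangesSignAtMostTwice p') :
    ∫ x in (0:ℝ)..1, |p' x| ≤ 6 * M := by
  obtain ⟨zm, zp, h0m, hmp, hp1, hcase⟩ := hsign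
  have hm1 : zm ≤ 1 := hmp.trans hp1
  have h0p : 0 ≤ zp := h0m.trans hmp
  have hsub1 : Icc (0:ℝ) zm ⊆ Icc 0 1 := Icc_subset_Icc le_rfl hm1
  have hsub2 : Icc zm zp ⊆ Icc 0 1 := Icc_subset_Icc h0m hp1
  have hsub3 : Icc zp (1:ℝ) ⊆ Icc 0 1 := Icc_subset_Icc h0p le_rfl
  have habs : ContinuousOn (fun x => |p' x|) (Icc 0 1) := hc.abs
  have hI1 : IntervalIntegrable (fun x => |p' x|) MeasureTheory.volume 0 zm :=
    (habs.mono hsub1).intervalIntegrable_of_Icc h0m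
  have hI2 : IntervalIntegrable (fun x => |p' x|) MeasureTheory.volume zm zp :=
    (habs.mono hsub2).intervalIntegrable_of_Icc hmp
  have hI3 : IntervalIntegrable (fun x => |p' x|) MeasureTheory.volume zp 1 :=
    (habs.mono hsub3).intervalIntegrable_of_Icc hp1
  have hsplit : ∫ x in (0:ℝ)..1, |p' x| =
      (∫ x in (0:ℝ)..zm, |p' x|) + (∫ x in zm..zp, |p' x|) + (∫ x in zp..(1:ℝ), |p' x|) := by
    rw [← intervalIntegral.integral_add_adjacent_intervals (hI1.trans hI2) hI3,
      ← intervalIntegral.integral_add_adjacent_intervals hI1 hI2]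
  have hb1 : ∫ x in (0:ℝ)..zm, |p' x| ≤ 2 * M := by
    apply myPiece h0m hsub1 hd hc hM
    rcases hcase with ⟨_, h⟩ | ⟨_, h⟩
    · exact Or.inr (fun x hx => h x (Or.inl hx))
    · exact Or.inl (fun x hx => h x (Or.inl hx))
  have hb2 : ∫ x in zm..zp, |p' x| ≤ 2 * M := by
    apply myPiece hmp hsub2 hd hc hM
    rcases hcase with ⟨h, _⟩ | ⟨h, _⟩
    · exact Or.inl h
    · exact Or.inr h
  have hb3 : ∫ x in zp..(1:ℝ), |p' x| ≤ 2 * M := by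
    apply myPiece hp1 hsub3 hd hc hM
    rcases hcase with ⟨_, h⟩ | ⟨_, h⟩
    · exact Or.inr (fun x hx => h x (Or.inr hx))
    · exact Or.inl (fun x hx => h x (Or.inr hx))
  rw [hsplit]; linarith

lemma myArith {u v x y c₁ c₂ : ℝ} (hc₁ : 0 < c₁) (hc₂ : 0 < c₂) (hx : c₁ ≤ |x|) (hy : c₂ ≤ |y|) :
    |u * y + x * v| / (2*π*(x*y)^2) ≤
      (1/(2*π*c₂)) * |u / x^2| + (1/(2*π*c₁)) * |v / y^2| := by
  have hπ := Real.pi_pos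
  have ha : 0 < |x| := lt_of_lt_of_le hc₁ hx
  have hb : 0 < |y| := lt_of_lt_of_le hc₂ hy
  have hx0 : x ≠ 0 := abs_pos.mp ha
  have hy0 : y ≠ 0 := abs_pos.mp hb
  have h1 : (x*y)^2 = |x|^2 * |y|^2 := by rw [mul_pow, sq_abs, sq_abs]
  set a := |x| with hA
  set b := |y| with hB
  calc |u * y + x * v| / (2*π*(x*y)^2)
      ≤ (|u| * b + a * |v|) / (2*π*(x*y)^2) := by
        gcongr
        exact (abs_add_le _ _).trans (by rw [abs_mul, abs_mul])
    _ = |u|/(2*π*(a^2 * b)) + |v|/(2*π*(a * b^2)) := by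
        rw [h1]; field_simp
    _ ≤ |u|/(2*π*(a^2 * c₂)) + |v|/(2*π*(c₁ * b^2)) := by
        gcongr
    _ = (1/(2*π*c₂)) * |u / x^2| + (1/(2*π*c₁)) * |v / y^2| := by
        rw [abs_div, abs_div, abs_pow, abs_pow, ← hA, ← hB]
        field_simp


theorem stmt_3 (g g' g'' G G' : ℝ → ℝ) (c₁ c₂ : ℝ) (hc₁ : 0 < c₁) (hc₂ : 0 < c₂)
    -- g is C² on [0,1] with first derivative g' and second derivative g''
    (hg' : ∀ z ∈ Set.Icc (0:ℝ) 1, HasDerivWithinAt g (g' z) (Set.Icc (0:ℝ) 1) z)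
    (hg'' : ∀ z ∈ Set.Icc (0:ℝ) 1, HasDerivWithinAt g' (g'' z) (Set.Icc (0:ℝ) 1) z)
    (hg''c : ContinuousOn g'' (Set.Icc (0:ℝ) 1))
    -- G is C¹ on [0,1] with derivative G'
    (hG' : ∀ z ∈ Set.Icc (0:ℝ) 1, HasDerivWithinAt G (G' z) (Set.Icc (0:ℝ) 1) z)
    (hG'c : ContinuousOn G' (Set.Icc (0:ℝ) 1))
    -- lower bounds and sign conditions
    (hg'lb : ∀ z ∈ Set.Icc (0:ℝ) 1, c₁ ≤ |g' z|)
    (hg''sign : ChangesSignAtMostTwice g'')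
    (hGlb : ∀ z ∈ Set.Icc (0:ℝ) 1, c₂ ≤ |G z|)
    (hG'sign : ChangesSignAtMostTwice G') :
    ‖∫ z in (0:ℝ)..1, Complex.exp (Complex.I * ((2 * π * g z : ℝ) : ℂ)) / (G z : ℂ)‖
      ≤ 14 / (π * c₁ * c₂) := by
  have hπ := Real.pi_pos
  have h01 : (0:ℝ) ≤ 1 := zero_le_one
  set S := Set.Icc (0:ℝ) 1 with hS
  -- basic continuity and nonvanishing
  have cg : ContinuousOn g S := fun z hz => (hg' z hz).continuousWithinAt
  have cg' : ContinuousOn g' S := fun z hz => (hg'' z hz).continuousWithinAt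
  have cG : ContinuousOn G S := fun z hz => (hG' z hz).continuousWithinAt
  have hg'ne : ∀ z ∈ S, g' z ≠ 0 := fun z hz => abs_pos.mp (hc₁.trans_le (hg'lb z hz))
  have hGne : ∀ z ∈ S, G z ≠ 0 := fun z hz => abs_pos.mp (hc₂.trans_le (hGlb z hz))
  -- the oscillating exponential
  set e : ℝ → ℂ := fun z => Complex.exp (Complex.I * ((2 * π * g z : ℝ) : ℂ)) with he_def
  have ce : ContinuousOn e S :=
    (continuousOn_const.mul (Complex.continuous_ofReal.comp_continuousOn
      (continuousOn_const.mul cg))).cexp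
  have habse : ∀ z, ‖e z‖ = 1 := by
    intro z
    rw [he_def]
    simp [Complex.norm_exp]
  have he : ∀ z ∈ S, HasDerivWithinAt e (Complex.I * ((2 * π * g' z : ℝ) : ℂ) * e z) S z := by
    intro z hz
    have h1 : HasDerivWithinAt (fun y => ((2 * π * g y : ℝ) : ℂ)) ((2 * π * g' z : ℝ) : ℂ) S z :=
      myOfRealComp ((hg' z hz).const_mul (2 * π))
    have h2 := (h1.const_mul Complex.I).cexp
    convert h2 using 1
    ring
  -- denominator of H
  set w : ℝ → ℂ := fun z => 2 * π * Complex.I * ((g' z * G z : ℝ) : ℂ) with hw_def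
  have hwne : ∀ z ∈ S, w z ≠ 0 := by
    intro z hz
    simp only [hw_def]
    push_cast
    exact mul_ne_zero (mul_ne_zero (mul_ne_zero two_ne_zero
      (Complex.ofReal_ne_zero.2 hπ.ne')) Complex.I_ne_zero)
      (mul_ne_zero (Complex.ofReal_ne_zero.2 (hg'ne z hz)) (Complex.ofReal_ne_zero.2 (hGne z hz)))
  have hw : ∀ z ∈ S, HasDerivWithinAt w
      (2 * π * Complex.I * ((g'' z * G z + g' z * G' z : ℝ) : ℂ)) S z := by
    intro z hz
    exact (myOfRealComp ((hg'' z hz).mul (hG' z hz))).const_mul (2 * π * Complex.I)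
  set H : ℝ → ℂ := fun z => e z / w z with hH_def
  set s : ℝ → ℂ := fun z =>
    ((g'' z * G z + g' z * G' z : ℝ) : ℂ) / (2 * π * Complex.I * (((g' z * G z : ℝ) : ℂ))^2)
    with hs_def
  set D : ℝ → ℂ := fun z => e z / (G z : ℂ) - e z * s z with hD_def
  have hH : ∀ z ∈ S, HasDerivWithinAt H (D z) S z := by
    intro z hz
    have h := (he z hz).div (hw z hz) (hwne z hz)
    refine h.congr_deriv ?_
    symm
    simp only [hD_def, hs_def, hw_def]
    have h1 : (g' z : ℂ) ≠ 0 := Complex.ofReal_ne_zero.2 (hg'ne z hz)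
    have h2 : (G z : ℂ) ≠ 0 := Complex.ofReal_ne_zero.2 (hGne z hz)
    have h3 : (π : ℂ) ≠ 0 := Complex.ofReal_ne_zero.2 hπ.ne'
    push_cast
    have hd1 : (2*(π:ℂ)*Complex.I*((g' z : ℂ)*(G z : ℂ))^2) ≠ 0 := by
      apply mul_ne_zero (mul_ne_zero (mul_ne_zero two_ne_zero h3) Complex.I_ne_zero)
      exact pow_ne_zero 2 (mul_ne_zero h1 h2)
    have hd2 : ((2*(π:ℂ)*Complex.I*((g' z : ℂ)*(G z : ℂ)))^2 : ℂ) ≠ 0 :=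
      pow_ne_zero 2 (mul_ne_zero (mul_ne_zero (mul_ne_zero two_ne_zero h3) Complex.I_ne_zero)
        (mul_ne_zero h1 h2))
    rw [mul_div_assoc', div_sub_div _ _ h2 hd1, div_eq_div_iff (mul_ne_zero h2 hd1) hd2]
    ring
  -- continuity of s, D, etc.
  have ccast : ∀ (f : ℝ → ℝ), ContinuousOn f S → ContinuousOn (fun z => ((f z : ℝ) : ℂ)) S :=
    fun f hf => Complex.continuous_ofReal.comp_continuousOn hf
  have cs : ContinuousOn s S := by
    rw [hs_def]
    apply ContinuousOn.div
    · exact ccast _ ((hg''c.mul cG).add (cg'.mul hG'c))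
    · exact continuousOn_const.mul ((ccast _ (cg'.mul cG)).pow 2)
    · intro z hz
      exact mul_ne_zero (mul_ne_zero (mul_ne_zero two_ne_zero
          (Complex.ofReal_ne_zero.2 hπ.ne')) Complex.I_ne_zero)
        (pow_ne_zero 2 (Complex.ofReal_ne_zero.2 (mul_ne_zero (hg'ne z hz) (hGne z hz))))
  have cf : ContinuousOn (fun z => e z / (G z : ℂ)) S :=
    ce.div (ccast _ cG) (fun z hz => Complex.ofReal_ne_zero.2 (hGne z hz))
  have ces : ContinuousOn (fun z => e z * s z) S := ce.mul cs
  have cD : ContinuousOn D S := by rw [hD_def]; exact cf.sub ces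
  have hFTC : ∫ z in (0:ℝ)..1, D z = H 1 - H 0 := myFTC h01 hH cD
  have hIf : IntervalIntegrable (fun z => e z / (G z : ℂ)) MeasureTheory.volume 0 1 :=
    cf.intervalIntegrable_of_Icc h01
  have hIes : IntervalIntegrable (fun z => e z * s z) MeasureTheory.volume 0 1 :=
    ces.intervalIntegrable_of_Icc h01
  have hsplit : (∫ z in (0:ℝ)..1, e z / (G z : ℂ))
      = (H 1 - H 0) + ∫ z in (0:ℝ)..1, e z * s z := by
    have h2 : ∫ z in (0:ℝ)..1, D z
        = (∫ z in (0:ℝ)..1, e z / (G z : ℂ)) - ∫ z in (0:ℝ)..1, e z * s z := by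
      rw [hD_def]; exact intervalIntegral.integral_sub hIf hIes
    linear_combination hFTC - h2
  -- bound on |H|
  have hHb : ∀ z ∈ S, ‖H z‖ ≤ 1/(2*π*c₁*c₂) := by
    intro z hz
    have hcalc : ‖H z‖ = 1/(2*π*(|g' z| * |G z|)) := by
      rw [hH_def]
      simp only
      rw [norm_div, habse, hw_def]
      simp only
      rw [norm_mul, norm_mul, norm_mul, Complex.norm_real, Real.norm_eq_abs, Complex.norm_real, Real.norm_eq_abs, Complex.norm_I,
        Complex.norm_two, abs_of_pos hπ, abs_mul, mul_one]
    rw [hcalc]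
    calc 1/(2*π*(|g' z| * |G z|)) ≤ 1/(2*π*(c₁*c₂)) := by
          gcongr
          · exact hg'lb z hz
          · exact hGlb z hz
      _ = 1/(2*π*c₁*c₂) := by ring_nf
  -- pointwise bound on |e*s|
  set pd : ℝ → ℝ := fun z => -g'' z / (g' z)^2 with hpd_def
  set qd : ℝ → ℝ := fun z => -G' z / (G z)^2 with hqd_def
  set P : ℝ → ℝ := fun z => (1/(2*π*c₂)) * |pd z| + (1/(2*π*c₁)) * |qd z| with hP_def
  have hptw : ∀ z ∈ S, ‖e z * s z‖ ≤ P z := by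
    intro z hz
    rw [norm_mul, habse, one_mul, hs_def]
    simp only
    rw [norm_div]
    have hden : ‖2*(π:ℂ)*Complex.I*(((g' z * G z : ℝ) : ℂ))^2‖
        = 2*π*(g' z * G z)^2 := by
      rw [norm_mul, norm_mul, norm_mul, norm_pow, Complex.norm_real, Real.norm_eq_abs, Complex.norm_real, Real.norm_eq_abs,
        Complex.norm_I, Complex.norm_two, abs_of_pos hπ, mul_one, sq_abs]
    rw [Complex.norm_real, Real.norm_eq_abs, hden, hP_def]
    simp only [hpd_def, hqd_def]
    have h := myArith (u := g'' z) (v := G' z) (x := g' z) (y := G z) hc₁ hc₂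
      (hg'lb z hz) (hGlb z hz)
    rw [neg_div, abs_neg, neg_div, abs_neg]
    exact h
  -- continuity of pd, qd, P
  have cpd : ContinuousOn pd S := by
    rw [hpd_def]
    exact (hg''c.neg).div (cg'.pow 2) (fun z hz => pow_ne_zero 2 (hg'ne z hz))
  have cqd : ContinuousOn qd S := by
    rw [hqd_def]
    exact (hG'c.neg).div (cG.pow 2) (fun z hz => pow_ne_zero 2 (hGne z hz))
  have cP : ContinuousOn P S := by
    rw [hP_def]
    exact (continuousOn_const.mul cpd.abs).add (continuousOn_const.mul cqd.abs)
  have hIpd : IntervalIntegrable (fun z => |pd z|) MeasureTheory.volume 0 1 :=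
    (cpd.abs).intervalIntegrable_of_Icc h01
  have hIqd : IntervalIntegrable (fun z => |qd z|) MeasureTheory.volume 0 1 :=
    (cqd.abs).intervalIntegrable_of_Icc h01
  -- integral norm bound
  have hnorm : ‖∫ z in (0:ℝ)..1, e z * s z‖ ≤ ∫ z in (0:ℝ)..1, P z := by
    calc ‖∫ z in (0:ℝ)..1, e z * s z‖ ≤ ∫ z in (0:ℝ)..1, ‖e z * s z‖ :=
          intervalIntegral.norm_integral_le_integral_norm h01
      _ ≤ ∫ z in (0:ℝ)..1, P z := by
          apply intervalIntegral.integral_mono_on h01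
            (ces.norm.intervalIntegrable_of_Icc h01) (cP.intervalIntegrable_of_Icc h01)
          intro z hz
          exact hptw z hz
  -- TV bounds
  have hTV1 : ∫ z in (0:ℝ)..1, |pd z| ≤ 6 * c₁⁻¹ := by
    apply myTV (p := fun z => (g' z)⁻¹) (p' := pd)
    · intro x hx
      rw [hpd_def]
      exact (hg'' x hx).inv (hg'ne x hx)
    · exact cpd
    · intro x hx
      rw [abs_inv]
      exact inv_anti₀ hc₁ (hg'lb x hx)
    · obtain ⟨zm, zp, h0, h1, h2, hcse⟩ := hg''sign
      refine ⟨zm, zp, h0, h1, h2, ?_⟩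
      rw [hpd_def]
      rcases hcse with ⟨ha, hb⟩ | ⟨ha, hb⟩
      · right
        constructor
        · intro z hz
          exact div_nonpos_of_nonpos_of_nonneg (neg_nonpos.2 (ha z hz)) (sq_nonneg _)
        · intro z hz
          exact div_nonneg (neg_nonneg.2 (hb z hz)) (sq_nonneg _)
      · left
        constructor
        · intro z hz
          exact div_nonneg (neg_nonneg.2 (ha z hz)) (sq_nonneg _)
        · intro z hz
          exact div_nonpos_of_nonpos_of_nonneg (neg_nonpos.2 (hb z hz)) (sq_nonneg _)
  have hTV2 : ∫ z in (0:ℝ)..1, |qd z| ≤ 6 * c₂⁻¹ := by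
    apply myTV (p := fun z => (G z)⁻¹) (p' := qd)
    · intro x hx
      rw [hqd_def]
      exact (hG' x hx).inv (hGne x hx)
    · exact cqd
    · intro x hx
      rw [abs_inv]
      exact inv_anti₀ hc₂ (hGlb x hx)
    · obtain ⟨zm, zp, h0, h1, h2, hcse⟩ := hG'sign
      refine ⟨zm, zp, h0, h1, h2, ?_⟩
      rw [hqd_def]
      rcases hcse with ⟨ha, hb⟩ | ⟨ha, hb⟩
      · right
        constructor
        · intro z hz
          exact div_nonpos_of_nonpos_of_nonneg (neg_nonpos.2 (ha z hz)) (sq_nonneg _)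
        · intro z hz
          exact div_nonneg (neg_nonneg.2 (hb z hz)) (sq_nonneg _)
      · left
        constructor
        · intro z hz
          exact div_nonneg (neg_nonneg.2 (ha z hz)) (sq_nonneg _)
        · intro z hz
          exact div_nonpos_of_nonpos_of_nonneg (neg_nonpos.2 (hb z hz)) (sq_nonneg _)
  -- value of ∫ P
  have hPval : ∫ z in (0:ℝ)..1, P z
      = (1/(2*π*c₂)) * (∫ z in (0:ℝ)..1, |pd z|) + (1/(2*π*c₁)) * ∫ z in (0:ℝ)..1, |qd z| := by
    rw [hP_def]
    rw [intervalIntegral.integral_add (hIpd.const_mul _) (hIqd.const_mul _),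
      intervalIntegral.integral_const_mul, intervalIntegral.integral_const_mul]
  have hPbound : ∫ z in (0:ℝ)..1, P z ≤ (1/(2*π*c₂)) * (6*c₁⁻¹) + (1/(2*π*c₁)) * (6*c₂⁻¹) := by
    rw [hPval]
    gcongr
  -- assemble
  have hmem1 : (1:ℝ) ∈ S := by rw [hS]; exact ⟨h01, le_refl 1⟩
  have hmem0 : (0:ℝ) ∈ S := by rw [hS]; exact ⟨le_refl 0, h01⟩
  show ‖∫ z in (0:ℝ)..1, e z / (G z : ℂ)‖ ≤ 14 / (π * c₁ * c₂)
  rw [hsplit]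
  have hstep1 : ‖(H 1 - H 0) + ∫ z in (0:ℝ)..1, e z * s z‖
      ≤ (‖H 1‖ + ‖H 0‖) + ∫ z in (0:ℝ)..1, P z := by
    refine (norm_add_le _ _).trans (add_le_add ?_ hnorm)
    simpa using norm_sub_le (H 1) (H 0)
  have h7 : ((1/(2*π*c₁*c₂) + 1/(2*π*c₁*c₂)) + ((1/(2*π*c₂)) * (6*c₁⁻¹) + (1/(2*π*c₁)) * (6*c₂⁻¹)))
      = 7/(π*c₁*c₂) := by
    field_simp
    ring
  calc ‖(H 1 - H 0) + ∫ z in (0:ℝ)..1, e z * s z‖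
      ≤ (‖H 1‖ + ‖H 0‖) + ∫ z in (0:ℝ)..1, P z := hstep1
    _ ≤ (1/(2*π*c₁*c₂) + 1/(2*π*c₁*c₂)) + ((1/(2*π*c₂)) * (6*c₁⁻¹) + (1/(2*π*c₁)) * (6*c₂⁻¹)) :=
        add_le_add (add_le_add (hHb 1 hmem1) (hHb 0 hmem0)) hPbound
    _ = 7/(π*c₁*c₂) := h7
    _ ≤ 14/(π*c₁*c₂) := by
        gcongr
        norm_num
end

section
/- Let g : [0,1] → ℝ be a C² function such that |g′(z)| ≥ c₁ > 0 for all z ∈ [0,1], and such that there exist 0 ≤ z₋ ≤ z₊ ≤ 1 with either (g″ ≥ 0 on [z₋, z₊] and g″ ≤ 0 on [0, z₋] ∪ [z₊, 1]) or the same with the inequalities reversed. Then ∫₀¹ |g″(z)| / g′(z)² dz ≤ 6/c₁. -/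
open Real Set
lemma aux_key (g' g'' : ℝ → ℝ) (c₁ : ℝ) (hc₁ : 0 < c₁) (a b : ℝ)
    (ha : 0 ≤ a) (hab : a ≤ b) (hb : b ≤ 1)
    (hg'' : ∀ z ∈ Set.Icc (0:ℝ) 1, HasDerivWithinAt g' (g'' z) (Set.Icc (0:ℝ) 1) z)
    (hg''c : ContinuousOn g'' (Set.Icc (0:ℝ) 1))
    (hlb : ∀ z ∈ Set.Icc (0:ℝ) 1, c₁ ≤ |g' z|)
    (hsign : (∀ z ∈ Set.Icc a b, 0 ≤ g'' z) ∨ (∀ z ∈ Set.Icc a b, g'' z ≤ 0)) :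
    (∫ z in a..b, |g'' z| / (g' z) ^ 2) ≤ 2 / c₁ := by
  have hsub : Set.Icc a b ⊆ Set.Icc (0:ℝ) 1 := Set.Icc_subset_Icc ha hb
  have hg'ne : ∀ z ∈ Set.Icc (0:ℝ) 1, g' z ≠ 0 := by
    intro z hz h
    have := hlb z hz; rw [h, abs_zero] at this; linarith
  have hg'cont : ContinuousOn g' (Set.Icc (0:ℝ) 1) :=
    fun z hz => (hg'' z hz).continuousWithinAt
  have hFderiv : ∀ x ∈ Set.Ioo a b,
      HasDerivAt (fun z => -(g' z)⁻¹) (g'' x / (g' x) ^ 2) x := by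
    intro x hx
    have hx1 : x ∈ Set.Icc (0:ℝ) 1 := hsub (Set.Ioo_subset_Icc_self hx)
    have hnhds : Set.Icc (0:ℝ) 1 ∈ nhds x := by
      apply Icc_mem_nhds
      · linarith [hx.1]
      · linarith [hx.2]
    have hd : HasDerivAt (fun z => -(g' z)⁻¹) _ x := (((hg'' x hx1).hasDerivAt hnhds).inv (hg'ne x hx1)).neg
    convert hd using 1
    ring
  have hFcont : ContinuousOn (fun z => -(g' z)⁻¹) (Set.Icc a b) :=
    ((hg'cont.mono hsub).inv₀ (fun z hz => hg'ne z (hsub hz))).neg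
  have hintc : ContinuousOn (fun z => g'' z / (g' z) ^ 2) (Set.Icc a b) :=
    (hg''c.mono hsub).div ((hg'cont.mono hsub).pow 2)
      (fun z hz => pow_ne_zero 2 (hg'ne z (hsub hz)))
  have hint : IntervalIntegrable (fun z => g'' z / (g' z) ^ 2) MeasureTheory.volume a b := by
    apply ContinuousOn.intervalIntegrable
    rwa [Set.uIcc_of_le hab]
  have hftc : (∫ z in a..b, g'' z / (g' z) ^ 2) = -(g' b)⁻¹ - -(g' a)⁻¹ :=
    intervalIntegral.integral_eq_sub_of_hasDerivAt_of_le hab hFcont hFderiv hint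
  have hbnd : ∀ z ∈ Set.Icc (0:ℝ) 1, |(g' z)⁻¹| ≤ c₁⁻¹ := by
    intro z hz
    rw [abs_inv]
    exact inv_anti₀ hc₁ (hlb z hz)
  have ha1 : a ∈ Set.Icc (0:ℝ) 1 := ⟨ha, le_trans hab hb⟩
  have hb1 : b ∈ Set.Icc (0:ℝ) 1 := ⟨le_trans ha hab, hb⟩
  have hdiff : |-(g' b)⁻¹ - -(g' a)⁻¹| ≤ 2 / c₁ := by
    have h1 := hbnd a ha1
    have h2 := hbnd b hb1
    have : (2:ℝ) / c₁ = c₁⁻¹ + c₁⁻¹ := by ring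
    rw [this]
    calc |-(g' b)⁻¹ - -(g' a)⁻¹| ≤ |(g' b)⁻¹| + |(g' a)⁻¹| := by
          rw [neg_sub_neg, abs_sub_comm]; exact abs_sub (g' b)⁻¹ (g' a)⁻¹
      _ ≤ c₁⁻¹ + c₁⁻¹ := add_le_add h2 h1
  rcases hsign with hpos | hneg
  · have heq : (∫ z in a..b, |g'' z| / (g' z) ^ 2) = ∫ z in a..b, g'' z / (g' z) ^ 2 := by
      apply intervalIntegral.integral_congr
      intro z hz
      rw [Set.uIcc_of_le hab] at hz
      simp [abs_of_nonneg (hpos z hz)]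
    rw [heq, hftc]
    exact le_trans (le_abs_self _) hdiff
  · have heq : (∫ z in a..b, |g'' z| / (g' z) ^ 2) = -∫ z in a..b, g'' z / (g' z) ^ 2 := by
      rw [← intervalIntegral.integral_neg]
      apply intervalIntegral.integral_congr
      intro z hz
      rw [Set.uIcc_of_le hab] at hz
      simp only []
      rw [abs_of_nonpos (hneg z hz)]
      ring
    rw [heq, hftc]
    exact le_trans (neg_le_abs _) hdiff
theorem stmt_6 (g g' g'' : ℝ → ℝ) (c₁ : ℝ) (hc₁ : 0 < c₁)
    -- g is C² on [0,1] with first derivative g' and second derivative g''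
    (hg' : ∀ z ∈ Set.Icc (0:ℝ) 1, HasDerivWithinAt g (g' z) (Set.Icc (0:ℝ) 1) z)
    (hg'' : ∀ z ∈ Set.Icc (0:ℝ) 1, HasDerivWithinAt g' (g'' z) (Set.Icc (0:ℝ) 1) z)
    (hg''c : ContinuousOn g'' (Set.Icc (0:ℝ) 1))
    (hg'lb : ∀ z ∈ Set.Icc (0:ℝ) 1, c₁ ≤ |g' z|)
    (hg''sign : ChangesSignAtMostTwice g'') :
    (∫ z in (0:ℝ)..1, |g'' z| / (g' z) ^ 2) ≤ 6 / c₁ := by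
  obtain ⟨zm, zp, hzm0, hzmzp, hzp1, hsgn⟩ := hg''sign
  have hzm1 : zm ≤ 1 := le_trans hzmzp hzp1
  have hzp0 : 0 ≤ zp := le_trans hzm0 hzmzp
  have hg'ne : ∀ z ∈ Set.Icc (0:ℝ) 1, g' z ≠ 0 := by
    intro z hz h
    have := hg'lb z hz; rw [h, abs_zero] at this; linarith
  have hg'cont : ContinuousOn g' (Set.Icc (0:ℝ) 1) :=
    fun z hz => (hg'' z hz).continuousWithinAt
  have hcont : ContinuousOn (fun z => |g'' z| / (g' z) ^ 2) (Set.Icc (0:ℝ) 1) :=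
    hg''c.abs.div (hg'cont.pow 2) (fun z hz => pow_ne_zero 2 (hg'ne z hz))
  have hii : ∀ a b : ℝ, 0 ≤ a → a ≤ b → b ≤ 1 →
      IntervalIntegrable (fun z => |g'' z| / (g' z) ^ 2) MeasureTheory.volume a b := by
    intro a b ha hab hb
    apply ContinuousOn.intervalIntegrable
    rw [Set.uIcc_of_le hab]
    exact hcont.mono (Set.Icc_subset_Icc ha hb)
  have e2 : (∫ z in zm..zp, |g'' z| / (g' z) ^ 2) + (∫ z in zp..1, |g'' z| / (g' z) ^ 2)
      = ∫ z in zm..1, |g'' z| / (g' z) ^ 2 :=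
    intervalIntegral.integral_add_adjacent_intervals
      (hii zm zp hzm0 hzmzp hzp1) (hii zp 1 hzp0 hzp1 le_rfl)
  have e1 : (∫ z in (0:ℝ)..zm, |g'' z| / (g' z) ^ 2) + (∫ z in zm..1, |g'' z| / (g' z) ^ 2)
      = ∫ z in (0:ℝ)..1, |g'' z| / (g' z) ^ 2 :=
    intervalIntegral.integral_add_adjacent_intervals
      (hii 0 zm le_rfl hzm0 hzm1) (hii zm 1 hzm0 hzm1 le_rfl)
  have s1 : (∀ z ∈ Set.Icc (0:ℝ) zm, 0 ≤ g'' z) ∨ (∀ z ∈ Set.Icc (0:ℝ) zm, g'' z ≤ 0) := by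
    rcases hsgn with ⟨_, h⟩ | ⟨_, h⟩
    · exact Or.inr fun z hz => h z (Or.inl hz)
    · exact Or.inl fun z hz => h z (Or.inl hz)
  have s2 : (∀ z ∈ Set.Icc zm zp, 0 ≤ g'' z) ∨ (∀ z ∈ Set.Icc zm zp, g'' z ≤ 0) := by
    rcases hsgn with ⟨h, _⟩ | ⟨h, _⟩
    · exact Or.inl h
    · exact Or.inr h
  have s3 : (∀ z ∈ Set.Icc zp 1, 0 ≤ g'' z) ∨ (∀ z ∈ Set.Icc zp 1, g'' z ≤ 0) := by
    rcases hsgn with ⟨_, h⟩ | ⟨_, h⟩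
    · exact Or.inr fun z hz => h z (Or.inr hz)
    · exact Or.inl fun z hz => h z (Or.inr hz)
  have b1 := aux_key g' g'' c₁ hc₁ 0 zm le_rfl hzm0 hzm1 hg'' hg''c hg'lb s1
  have b2 := aux_key g' g'' c₁ hc₁ zm zp hzm0 hzmzp hzp1 hg'' hg''c hg'lb s2
  have b3 := aux_key g' g'' c₁ hc₁ zp 1 hzp0 hzp1 le_rfl hg'' hg''c hg'lb s3
  have h6 : (6:ℝ) / c₁ = 2 / c₁ + 2 / c₁ + 2 / c₁ := by ring
  rw [← e1, ← e2, h6]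
  linarith
end

section
/- Let G : [0,1] → ℝ be a C¹ function such that |G(z)| ≥ c₂ > 0 for all z ∈ [0,1], and such that there exist 0 ≤ z₋ ≤ z₊ ≤ 1 with either (G′ ≥ 0 on [z₋, z₊] and G′ ≤ 0 on [0, z₋] ∪ [z₊, 1]) or the same with the inequalities reversed. Let h : [0,1] → ℝ be measurable with |h(z)| ≥ c₁ > 0 for all z ∈ [0,1]. Then ∫₀¹ |G′(z)| / ( |h(z)| · G(z)² ) dz ≤ 6/(c₁ c₂). -/
open Real Set MeasureTheory intervalIntegral

lemma key_piece (G G' h : ℝ → ℝ) (c₁ c₂ : ℝ) (hc₁ : 0 < c₁) (hc₂ : 0 < c₂)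
    (hG' : ∀ z ∈ Set.Icc (0:ℝ) 1, HasDerivWithinAt G (G' z) (Set.Icc (0:ℝ) 1) z)
    (hG'c : ContinuousOn G' (Set.Icc (0:ℝ) 1))
    (hGlb : ∀ z ∈ Set.Icc (0:ℝ) 1, c₂ ≤ |G z|)
    (hhlb : ∀ z ∈ Set.Icc (0:ℝ) 1, c₁ ≤ |h z|)
    (hFint : ∀ a b : ℝ, 0 ≤ a → a ≤ b → b ≤ 1 →
      IntervalIntegrable (fun z => |G' z| / (|h z| * (G z) ^ 2)) volume a b)
    (a b : ℝ) (ha : 0 ≤ a) (hab : a ≤ b) (hb : b ≤ 1)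
    (ε : ℝ) (hε : ε = 1 ∨ ε = -1)
    (hsign : ∀ z ∈ Set.Icc a b, 0 ≤ ε * G' z) :
    (∫ z in a..b, |G' z| / (|h z| * (G z) ^ 2)) ≤ 2 / (c₁ * c₂) := by
  have hsub : Set.Icc a b ⊆ Set.Icc (0:ℝ) 1 := Set.Icc_subset_Icc ha hb
  have hGcont : ContinuousOn G (Set.Icc (0:ℝ) 1) := fun z hz => (hG' z hz).continuousWithinAt
  have hGne : ∀ z ∈ Set.Icc (0:ℝ) 1, G z ≠ 0 := by
    intro z hz hzero
    have := hGlb z hz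
    rw [hzero, abs_zero] at this; linarith
  have hGsq : ∀ z ∈ Set.Icc (0:ℝ) 1, (0:ℝ) < (G z)^2 := fun z hz =>
    pow_pos (abs_pos.mpr (hGne z hz)) 2 |>.trans_eq (sq_abs (G z))
  -- RHS function
  set g : ℝ → ℝ := fun z => ε * G' z / (c₁ * (G z) ^ 2) with hg
  have hgcont : ContinuousOn g (Set.Icc a b) := by
    apply (continuousOn_const.mul (hG'c.mono hsub)).div
      (continuousOn_const.mul ((hGcont.mono hsub).pow 2))
    intro z hz
    exact mul_ne_zero hc₁.ne' (hGsq z (hsub hz)).ne'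
  have hgint : IntervalIntegrable g volume a b := by
    apply ContinuousOn.intervalIntegrable
    rwa [Set.uIcc_of_le hab]
  have habs : ∀ z ∈ Set.Icc a b, |G' z| = ε * G' z := by
    intro z hz
    have h1 := hsign z hz
    have : |ε * G' z| = |G' z| := by
      rcases hε with rfl | rfl <;> simp [abs_mul]
    rw [← this, abs_of_nonneg h1]
  -- pointwise bound
  have hpt : ∀ z ∈ Set.Icc a b, |G' z| / (|h z| * (G z) ^ 2) ≤ g z := by
    intro z hz
    rw [habs z hz, hg]
    have h1 : 0 ≤ ε * G' z := hsign z hz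
    have h2 : 0 < c₁ * (G z)^2 := mul_pos hc₁ (hGsq z (hsub hz))
    have h3 : c₁ * (G z)^2 ≤ |h z| * (G z)^2 :=
      mul_le_mul_of_nonneg_right (hhlb z (hsub hz)) (hGsq z (hsub hz)).le
    exact div_le_div_of_nonneg_left h1 h2 h3
  have hmono : (∫ z in a..b, |G' z| / (|h z| * (G z) ^ 2)) ≤ ∫ z in a..b, g z :=
    intervalIntegral.integral_mono_on hab (hFint a b ha hab hb) hgint hpt
  -- FTC
  have hftc : (∫ z in a..b, G' z / (G z)^2) = (G a)⁻¹ - (G b)⁻¹ := by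
    have : (∫ z in a..b, G' z / (G z)^2) = (-(G b)⁻¹) - (-(G a)⁻¹) := by
      apply intervalIntegral.integral_eq_sub_of_hasDeriv_right_of_le hab
      · exact (((hGcont.mono hsub).inv₀ (fun z hz => hGne z (hsub hz))).neg)
      · intro x hx
        have hx01 : x ∈ Set.Ioo (0:ℝ) 1 := ⟨lt_of_le_of_lt ha hx.1, lt_of_lt_of_le hx.2 hb⟩
        have hmem : Set.Icc (0:ℝ) 1 ∈ nhds x := Icc_mem_nhds hx01.1 hx01.2
        have hd : HasDerivAt G (G' x) x :=
          (hG' x (Set.Ioo_subset_Icc_self hx01)).hasDerivAt hmem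
        have := (hd.inv (hGne x (Set.Ioo_subset_Icc_self hx01))).neg
        have heq : -(-G' x / (G x)^2) = G' x / (G x)^2 := by ring
        rw [heq] at this
        exact this.hasDerivWithinAt
      · apply ContinuousOn.intervalIntegrable
        rw [Set.uIcc_of_le hab]
        exact (hG'c.mono hsub).div ((hGcont.mono hsub).pow 2)
          (fun z hz => (hGsq z (hsub hz)).ne')
    rw [this]; ring
  have hgval : (∫ z in a..b, g z) = (ε / c₁) * ((G a)⁻¹ - (G b)⁻¹) := by
    have : ∀ z, g z = (ε / c₁) * (G' z / (G z)^2) := by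
      intro z; rw [hg]; ring
    simp_rw [this]
    rw [intervalIntegral.integral_const_mul, hftc]
  have hinva : |(G a)⁻¹| ≤ c₂⁻¹ := by
    rw [abs_inv]
    exact inv_anti₀ hc₂ (hGlb a (hsub ⟨le_refl a, hab⟩))
  have hinvb : |(G b)⁻¹| ≤ c₂⁻¹ := by
    rw [abs_inv]
    exact inv_anti₀ hc₂ (hGlb b (hsub ⟨hab, le_refl b⟩))
  calc (∫ z in a..b, |G' z| / (|h z| * (G z) ^ 2)) ≤ ∫ z in a..b, g z := hmono
    _ = (ε / c₁) * ((G a)⁻¹ - (G b)⁻¹) := hgval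
    _ ≤ |(ε / c₁) * ((G a)⁻¹ - (G b)⁻¹)| := le_abs_self _
    _ = (1/c₁) * |(G a)⁻¹ - (G b)⁻¹| := by
        rw [abs_mul]; congr 1
        rcases hε with rfl | rfl <;> simp [abs_div, abs_of_pos hc₁, hc₁.le]
    _ ≤ (1/c₁) * (c₂⁻¹ + c₂⁻¹) := by
        apply mul_le_mul_of_nonneg_left _ (by positivity)
        exact (abs_sub _ _).trans (add_le_add hinva hinvb)
    _ = 2 / (c₁ * c₂) := by field_simp; ring

theorem stmt_7 (G G' h : ℝ → ℝ) (c₁ c₂ : ℝ) (hc₁ : 0 < c₁) (hc₂ : 0 < c₂)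
    -- G is C¹ on [0,1] with derivative G'
    (hG' : ∀ z ∈ Set.Icc (0:ℝ) 1, HasDerivWithinAt G (G' z) (Set.Icc (0:ℝ) 1) z)
    (hG'c : ContinuousOn G' (Set.Icc (0:ℝ) 1))
    (hGlb : ∀ z ∈ Set.Icc (0:ℝ) 1, c₂ ≤ |G z|)
    (hG'sign : ChangesSignAtMostTwice G')
    -- h is measurable and bounded below in modulus
    (hmeas : Measurable h)
    (hhlb : ∀ z ∈ Set.Icc (0:ℝ) 1, c₁ ≤ |h z|) :
    (∫ z in (0:ℝ)..1, |G' z| / (|h z| * (G z) ^ 2)) ≤ 6 / (c₁ * c₂) := by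
  obtain ⟨zm, zp, hzm0, hzmzp, hzp1, hcase⟩ := hG'sign
  have hGcont : ContinuousOn G (Set.Icc (0:ℝ) 1) := fun z hz => (hG' z hz).continuousWithinAt
  have hGne : ∀ z ∈ Set.Icc (0:ℝ) 1, G z ≠ 0 := by
    intro z hz hzero
    have := hGlb z hz
    rw [hzero, abs_zero] at this; linarith
  have hGsq : ∀ z ∈ Set.Icc (0:ℝ) 1, (0:ℝ) < (G z)^2 := fun z hz =>
    pow_pos (abs_pos.mpr (hGne z hz)) 2 |>.trans_eq (sq_abs (G z))
  set F : ℝ → ℝ := fun z => |G' z| / (|h z| * (G z) ^ 2) with hF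
  -- bound on |G'|
  obtain ⟨C, hC⟩ : ∃ C, ∀ z ∈ Set.Icc (0:ℝ) 1, |G' z| ≤ C := by
    obtain ⟨C, hC⟩ := (isCompact_Icc).exists_bound_of_continuousOn hG'c
    exact ⟨C, fun z hz => by simpa using hC z hz⟩
  -- integrability of F on Icc 0 1
  have hFintOn : IntegrableOn F (Set.Icc (0:ℝ) 1) := by
    have hmeasF : AEStronglyMeasurable F (volume.restrict (Set.Icc (0:ℝ) 1)) := by
      have h1 : ContinuousOn (fun z => |G' z| / (G z)^2) (Set.Icc (0:ℝ) 1) :=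
        (hG'c.abs).div ((hGcont).pow 2) (fun z hz => (hGsq z hz).ne')
      have h2 : AEStronglyMeasurable (fun z => |G' z| / (G z)^2)
          (volume.restrict (Set.Icc (0:ℝ) 1)) :=
        h1.aestronglyMeasurable measurableSet_Icc
      have h3 : AEStronglyMeasurable (fun z => (|h z|)⁻¹)
          (volume.restrict (Set.Icc (0:ℝ) 1)) :=
        (hmeas.abs.inv).aestronglyMeasurable
      have heq : F = fun z => (|G' z| / (G z)^2) * (|h z|)⁻¹ := by
        funext z; simp only [hF]
        rw [div_mul_eq_div_div_swap, div_eq_mul_inv]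
      rw [heq]
      exact h2.mul h3
    apply Integrable.mono' (integrable_const (C / (c₁ * c₂^2))) hmeasF
    filter_upwards [ae_restrict_mem measurableSet_Icc] with z hz
    rw [Real.norm_eq_abs, hF]
    have h0 : (0:ℝ) ≤ |G' z| / (|h z| * (G z)^2) := by positivity
    rw [abs_of_nonneg h0]
    apply div_le_div₀ ((abs_nonneg (G' z)).trans (hC z hz)) (hC z hz) (by positivity)
    apply mul_le_mul (hhlb z hz) _ (by positivity) (abs_nonneg _)
    calc c₂^2 = c₂ * c₂ := sq c₂
      _ ≤ |G z| * |G z| := mul_le_mul (hGlb z hz) (hGlb z hz) hc₂.le (abs_nonneg _)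
      _ = (G z)^2 := by rw [← abs_mul, ← sq, abs_sq]
  have hFint : ∀ a b : ℝ, 0 ≤ a → a ≤ b → b ≤ 1 →
      IntervalIntegrable F volume a b := by
    intro a b ha hab hb
    rw [intervalIntegrable_iff_integrableOn_Icc_of_le hab]
    exact hFintOn.mono_set (Set.Icc_subset_Icc ha hb)
  have key := key_piece G G' h c₁ c₂ hc₁ hc₂ hG' hG'c hGlb hhlb hFint
  have hsplit : (∫ z in (0:ℝ)..1, F z) =
      (∫ z in (0:ℝ)..zm, F z) + (∫ z in zm..zp, F z) + (∫ z in zp..1, F z) := by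
    rw [intervalIntegral.integral_add_adjacent_intervals
        (hFint 0 zm le_rfl hzm0 (hzmzp.trans hzp1))
        (hFint zm zp hzm0 hzmzp hzp1),
      intervalIntegral.integral_add_adjacent_intervals
        (hFint 0 zp le_rfl (hzm0.trans hzmzp) hzp1)
        (hFint zp 1 (hzm0.trans hzmzp) hzp1 le_rfl)]
  have h6 : (6:ℝ) / (c₁ * c₂) = 2/(c₁*c₂) + 2/(c₁*c₂) + 2/(c₁*c₂) := by ring
  rcases hcase with ⟨hpos, hneg⟩ | ⟨hneg, hpos⟩
  · have h1 : (∫ z in (0:ℝ)..zm, F z) ≤ 2/(c₁*c₂) := by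
      apply key 0 zm le_rfl hzm0 (hzmzp.trans hzp1) (-1) (Or.inr rfl)
      intro z hz
      have := hneg z (Or.inl hz)
      linarith [this]
    have h2 : (∫ z in zm..zp, F z) ≤ 2/(c₁*c₂) := by
      apply key zm zp hzm0 hzmzp hzp1 1 (Or.inl rfl)
      intro z hz
      simpa using hpos z hz
    have h3 : (∫ z in zp..1, F z) ≤ 2/(c₁*c₂) := by
      apply key zp 1 (hzm0.trans hzmzp) hzp1 le_rfl (-1) (Or.inr rfl)
      intro z hz
      have := hneg z (Or.inr hz)
      linarith [this]
    rw [hsplit, h6]; gcongr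
  · have h1 : (∫ z in (0:ℝ)..zm, F z) ≤ 2/(c₁*c₂) := by
      apply key 0 zm le_rfl hzm0 (hzmzp.trans hzp1) 1 (Or.inl rfl)
      intro z hz
      simpa using hpos z (Or.inl hz)
    have h2 : (∫ z in zm..zp, F z) ≤ 2/(c₁*c₂) := by
      apply key zm zp hzm0 hzmzp hzp1 (-1) (Or.inr rfl)
      intro z hz
      have := hneg z hz
      linarith [this]
    have h3 : (∫ z in zp..1, F z) ≤ 2/(c₁*c₂) := by
      apply key zp 1 (hzm0.trans hzmzp) hzp1 le_rfl 1 (Or.inl rfl)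
      intro z hz
      simpa using hpos z (Or.inr hz)
    rw [hsplit, h6]; gcongr
end

section
/- Let M ≥ 2 be an integer. Let X₁, …, X_M be i.i.d. random elements of a measurable space E, let W₁, …, W_M be i.i.d. random elements of a measurable space E′, with all 2M variables mutually independent, and let F : E × E′ → ℂ be measurable with |F| ≤ 1 everywhere. Define S = | E[ F(X₁, W₁) · conj(F(X₁, W₂)) · F(X₂, W₂) · conj(F(X₂, W₁)) ] |. Then (1/M³) · | Σ_{i,k,l,m=1}^{M} E[ F(X_k, W_i) · conj(F(X_k, W_l)) · F(X_m, W_l) · conj(F(X_m, W_i)) ] | ≤ 2 + M·S. -/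
open MeasureTheory ProbabilityTheory
open scoped BigOperators

universe u

theorem stmt_9 {Ω : Type*} {E E' : Type u} [MeasureSpace Ω]
    (hprob : IsProbabilityMeasure (volume : Measure Ω))
    [mE : MeasurableSpace E] [mE' : MeasurableSpace E']
    (M : ℕ) (hM : 2 ≤ M)
    (X : Fin M → Ω → E) (W : Fin M → Ω → E')
    (hXmeas : ∀ i, Measurable (X i)) (hWmeas : ∀ i, Measurable (W i))
    -- the 2M random variables X₁, …, X_M, W₁, …, W_M are mutually independent
    (hindep : iIndepFun (β := fun s : Fin M ⊕ Fin M => Sum.elim (fun _ => E) (fun _ => E') s)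
      (m := fun s => Sum.rec (motive := fun s => MeasurableSpace (Sum.elim (fun _ => E) (fun _ => E') s))
        (fun _ => mE) (fun _ => mE') s)
      (fun s => Sum.rec (motive := fun s => Ω → Sum.elim (fun _ => E) (fun _ => E') s)
        (fun i => X i) (fun j => W j) s) volume)
    -- the Xᵢ are identically distributed, and so are the Wᵢ
    (hXid : ∀ i j, IdentDistrib (X i) (X j) volume volume)
    (hWid : ∀ i j, IdentDistrib (W i) (W j) volume volume)
    (F : E × E' → ℂ) (hF : Measurable F) (hFbd : ∀ p, ‖F p‖ ≤ 1) :
    (1 / (M:ℝ) ^ 3) * ‖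
        (∑ i : Fin M, ∑ k : Fin M, ∑ l : Fin M, ∑ m : Fin M,
          ∫ ω, F (X k ω, W i ω) * (starRingEnd ℂ) (F (X k ω, W l ω)) *
            F (X m ω, W l ω) * (starRingEnd ℂ) (F (X m ω, W i ω)))‖
      ≤ 2 + (M:ℝ) * ‖
        (∫ ω, F (X ⟨0, by omega⟩ ω, W ⟨0, by omega⟩ ω) *
          (starRingEnd ℂ) (F (X ⟨0, by omega⟩ ω, W ⟨1, by omega⟩ ω)) *
          F (X ⟨1, by omega⟩ ω, W ⟨1, by omega⟩ ω) *
          (starRingEnd ℂ) (F (X ⟨1, by omega⟩ ω, W ⟨0, by omega⟩ ω)))‖ := by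
  classical
  set z0 : Fin M := ⟨0, by omega⟩
  set z1 : Fin M := ⟨1, by omega⟩
  set G : (E × E) × (E' × E') → ℂ := fun p =>
    F (p.1.1, p.2.1) * (starRingEnd ℂ) (F (p.1.1, p.2.2)) * F (p.1.2, p.2.2) *
      (starRingEnd ℂ) (F (p.1.2, p.2.1)) with hGdef
  have hGmeas : Measurable G := by
    apply Measurable.mul
    apply Measurable.mul
    apply Measurable.mul
    · exact hF.comp (measurable_fst.fst.prodMk measurable_snd.fst)
    · exact Complex.continuous_conj.measurable.comp (hF.comp (measurable_fst.fst.prodMk measurable_snd.snd))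
    · exact hF.comp (measurable_fst.snd.prodMk measurable_snd.snd)
    · exact Complex.continuous_conj.measurable.comp (hF.comp (measurable_fst.snd.prodMk measurable_snd.fst))
  have hfmeas : ∀ s : Fin M ⊕ Fin M, @Measurable Ω _ _
      (Sum.rec (motive := fun s => MeasurableSpace (Sum.elim (fun _ => E) (fun _ => E') s))
        (fun _ => mE) (fun _ => mE') s)
      (Sum.rec (motive := fun s => Ω → Sum.elim (fun _ => E) (fun _ => E') s)
        (fun i => X i) (fun j => W j) s) := by
    rintro (a | b); exacts [hXmeas a, hWmeas b]
  -- joint law of four distinct variables is the product of marginals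
  have key : ∀ k m i l : Fin M, k ≠ m → i ≠ l →
      (volume : Measure Ω).map (fun ω => ((X k ω, X m ω), (W i ω, W l ω))) =
        ((volume.map (X k)).prod (volume.map (X m))).prod
          ((volume.map (W i)).prod (volume.map (W l))) := by
    intro k m i l hkm hil
    have h2 : IndepFun (fun ω => (X k ω, X m ω)) (fun ω => (W i ω, W l ω)) volume :=
      hindep.indepFun_prodMk_prodMk hfmeas (Sum.inl k) (Sum.inl m) (Sum.inr i) (Sum.inr l)
        (by simp) (by simp) (by simp) (by simp)
    have h1 : IndepFun (X k) (X m) volume :=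
      hindep.indepFun (i := Sum.inl k) (j := Sum.inl m) (by simp [hkm])
    have h3 : IndepFun (W i) (W l) volume :=
      hindep.indepFun (i := Sum.inr i) (j := Sum.inr l) (by simp [hil])
    rw [(indepFun_iff_map_prod_eq_prod_map_map
          (((hXmeas k).prodMk (hXmeas m)).aemeasurable)
          (((hWmeas i).prodMk (hWmeas l)).aemeasurable)).mp h2,
        (indepFun_iff_map_prod_eq_prod_map_map (hXmeas k).aemeasurable
          (hXmeas m).aemeasurable).mp h1,
        (indepFun_iff_map_prod_eq_prod_map_map (hWmeas i).aemeasurable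
          (hWmeas l).aemeasurable).mp h3]
  -- the off-diagonal terms are all equal to the reference term
  have hconst : ∀ k m i l : Fin M, k ≠ m → i ≠ l →
      (∫ ω, F (X k ω, W i ω) * (starRingEnd ℂ) (F (X k ω, W l ω)) *
          F (X m ω, W l ω) * (starRingEnd ℂ) (F (X m ω, W i ω)))
        = ∫ ω, F (X z0 ω, W z0 ω) * (starRingEnd ℂ) (F (X z0 ω, W z1 ω)) *
            F (X z1 ω, W z1 ω) * (starRingEnd ℂ) (F (X z1 ω, W z0 ω)) := by
    intro k m i l hkm hil
    have h01 : z0 ≠ z1 := by simp [z0, z1, Fin.ext_iff]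
    have e1 : (∫ ω, F (X k ω, W i ω) * (starRingEnd ℂ) (F (X k ω, W l ω)) *
          F (X m ω, W l ω) * (starRingEnd ℂ) (F (X m ω, W i ω)))
        = ∫ p, G p ∂((volume : Measure Ω).map (fun ω => ((X k ω, X m ω), (W i ω, W l ω)))) := by
      rw [integral_map (((hXmeas k).prodMk (hXmeas m)).prodMk
          ((hWmeas i).prodMk (hWmeas l))).aemeasurable hGmeas.aestronglyMeasurable]
    have e2 : (∫ ω, F (X z0 ω, W z0 ω) * (starRingEnd ℂ) (F (X z0 ω, W z1 ω)) *
          F (X z1 ω, W z1 ω) * (starRingEnd ℂ) (F (X z1 ω, W z0 ω)))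
        = ∫ p, G p ∂((volume : Measure Ω).map (fun ω => ((X z0 ω, X z1 ω), (W z0 ω, W z1 ω)))) := by
      rw [integral_map (((hXmeas z0).prodMk (hXmeas z1)).prodMk
          ((hWmeas z0).prodMk (hWmeas z1))).aemeasurable hGmeas.aestronglyMeasurable]
    rw [e1, e2, key k m i l hkm hil, key z0 z1 z0 z1 h01 h01,
        (hXid k z0).map_eq, (hXid m z1).map_eq, (hWid i z0).map_eq, (hWid l z1).map_eq]
  set S : ℝ := ‖
        (∫ ω, F (X z0 ω, W z0 ω) * (starRingEnd ℂ) (F (X z0 ω, W z1 ω)) *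
            F (X z1 ω, W z1 ω) * (starRingEnd ℂ) (F (X z1 ω, W z0 ω)))‖ with hSdef
  have hS0 : 0 ≤ S := norm_nonneg _
  -- every term is bounded by 1 in modulus
  have hbd1 : ∀ k m i l : Fin M, ‖
      (∫ ω, F (X k ω, W i ω) * (starRingEnd ℂ) (F (X k ω, W l ω)) *
          F (X m ω, W l ω) * (starRingEnd ℂ) (F (X m ω, W i ω)))‖ ≤ 1 := by
    intro k m i l
    have := norm_integral_le_of_norm_le_const (μ := (volume : Measure Ω)) (C := 1)
      (f := fun ω => F (X k ω, W i ω) * (starRingEnd ℂ) (F (X k ω, W l ω)) *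
          F (X m ω, W l ω) * (starRingEnd ℂ) (F (X m ω, W i ω)))
      (ae_of_all _ (fun ω => by
        have hb : ∀ p, ‖F p‖ ≤ 1 := fun p => by exact hFbd p
        calc ‖F (X k ω, W i ω) * (starRingEnd ℂ) (F (X k ω, W l ω)) *
              F (X m ω, W l ω) * (starRingEnd ℂ) (F (X m ω, W i ω))‖
            = ‖F (X k ω, W i ω)‖ * ‖F (X k ω, W l ω)‖ * ‖F (X m ω, W l ω)‖ *
              ‖F (X m ω, W i ω)‖ := by simp [norm_mul]
          _ ≤ 1 := by
              have h1 := hb (X k ω, W i ω); have h2 := hb (X k ω, W l ω)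
              have h3 := hb (X m ω, W l ω); have h4 := hb (X m ω, W i ω)
              have n1 : (0:ℝ) ≤ ‖F (X k ω, W i ω)‖ := norm_nonneg _
              have n2 : (0:ℝ) ≤ ‖F (X k ω, W l ω)‖ := norm_nonneg _
              have n3 : (0:ℝ) ≤ ‖F (X m ω, W l ω)‖ := norm_nonneg _
              have n4 : (0:ℝ) ≤ ‖F (X m ω, W i ω)‖ := norm_nonneg _
              calc ‖F (X k ω, W i ω)‖ * ‖F (X k ω, W l ω)‖ * ‖F (X m ω, W l ω)‖ *
                    ‖F (X m ω, W i ω)‖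
                  ≤ 1 * 1 * 1 * 1 := by gcongr
                _ = 1 := by norm_num))
    simpa [hprob.measure_univ] using this
  -- pointwise bound: |term| ≤ 1_{i=l} + 1_{k=m} + S
  have hterm : ∀ i k l m : Fin M, ‖
      (∫ ω, F (X k ω, W i ω) * (starRingEnd ℂ) (F (X k ω, W l ω)) *
          F (X m ω, W l ω) * (starRingEnd ℂ) (F (X m ω, W i ω)))‖
      ≤ (if i = l then (1:ℝ) else 0) + (if k = m then (1:ℝ) else 0) + S := by
    intro i k l m
    by_cases hil : i = l
    · have h0 : (0:ℝ) ≤ (if k = m then (1:ℝ) else 0) := by positivity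
      rw [if_pos hil]
      linarith [hbd1 k m i l]
    · by_cases hkm : k = m
      · rw [if_neg hil, if_pos hkm]
        linarith [hbd1 k m i l]
      · rw [hconst k m i l hkm hil, if_neg hil, if_neg hkm]
        linarith
  -- sum the bounds
  have hsum : ‖
      (∑ i : Fin M, ∑ k : Fin M, ∑ l : Fin M, ∑ m : Fin M,
          ∫ ω, F (X k ω, W i ω) * (starRingEnd ℂ) (F (X k ω, W l ω)) *
            F (X m ω, W l ω) * (starRingEnd ℂ) (F (X m ω, W i ω)))‖
      ≤ 2 * (M:ℝ)^3 + (M:ℝ)^4 * S := by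
    have step : ‖
        (∑ i : Fin M, ∑ k : Fin M, ∑ l : Fin M, ∑ m : Fin M,
            ∫ ω, F (X k ω, W i ω) * (starRingEnd ℂ) (F (X k ω, W l ω)) *
              F (X m ω, W l ω) * (starRingEnd ℂ) (F (X m ω, W i ω)))‖
        ≤ ∑ i : Fin M, ∑ k : Fin M, ∑ l : Fin M, ∑ m : Fin M,
            ((if i = l then (1:ℝ) else 0) + (if k = m then (1:ℝ) else 0) + S) := by
      refine le_trans (norm_sum_le _ _) (Finset.sum_le_sum fun i _ => ?_)
      refine le_trans (norm_sum_le _ _) (Finset.sum_le_sum fun k _ => ?_)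
      refine le_trans (norm_sum_le _ _) (Finset.sum_le_sum fun l _ => ?_)
      refine le_trans (norm_sum_le _ _) (Finset.sum_le_sum fun m _ => ?_)
      exact hterm i k l m
    refine step.trans ?_
    have : ∑ i : Fin M, ∑ k : Fin M, ∑ l : Fin M, ∑ m : Fin M,
        ((if i = l then (1:ℝ) else 0) + (if k = m then (1:ℝ) else 0) + S)
        = (M:ℝ)^3 + (M:ℝ)^3 + (M:ℝ)^4 * S := by
      simp [Finset.sum_add_distrib, Finset.sum_ite_eq, Finset.sum_const, Finset.card_univ]
      ring
    rw [this]; ring_nf; linarith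
  have hM2 : (2:ℝ) ≤ (M:ℝ) := by exact_mod_cast hM
  have hMp : (0:ℝ) < (M:ℝ) := by linarith
  have hM3 : (0:ℝ) < (M:ℝ)^3 := pow_pos hMp 3
  calc (1 / (M:ℝ) ^ 3) * ‖
        (∑ i : Fin M, ∑ k : Fin M, ∑ l : Fin M, ∑ m : Fin M,
          ∫ ω, F (X k ω, W i ω) * (starRingEnd ℂ) (F (X k ω, W l ω)) *
            F (X m ω, W l ω) * (starRingEnd ℂ) (F (X m ω, W i ω)))‖
      ≤ (1 / (M:ℝ)^3) * (2 * (M:ℝ)^3 + (M:ℝ)^4 * S) :=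
        mul_le_mul_of_nonneg_left hsum (by positivity)
    _ = 2 + (M:ℝ) * S := by field_simp
end

section
/- There exists a constant K > 0 such that for every real T ≥ 1, | ∫_{[0,1]⁴} e^{−2πi T (y_b − y_a)(z_b − z_a)} dy_a dy_b dz_a dz_b | ≤ K · (1 + log T)/T. -/
open Real intervalIntegral

noncomputable def Fc (c : ℝ) : ℂ := ∫ t in (0:ℝ)..1, Complex.exp (-(Complex.I * c) * t)

lemma Fc_cont : Continuous Fc := by
  apply intervalIntegral.continuous_parametric_intervalIntegral_of_continuous'
  · exact Continuous.cexp (by fun_prop)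

lemma Fc_norm_le_one (c : ℝ) : ‖Fc c‖ ≤ 1 := by
  rw [Fc]
  have := intervalIntegral.norm_integral_le_of_norm_le_const
    (C := 1) (f := fun t : ℝ => Complex.exp (-(Complex.I * c) * t)) (a := 0) (b := 1) ?_
  · simpa using this
  · intro x hx
    rw [Complex.norm_exp]
    simp

lemma Fc_norm_le (c : ℝ) (hc : c ≠ 0) : ‖Fc c‖ ≤ 2 / |c| := by
  have hne : -(Complex.I * (c:ℂ)) ≠ 0 := by
    simp [Complex.ext_iff, hc]
  rw [Fc, integral_exp_mul_complex hne]
  rw [norm_div]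
  have h1 : ‖-(Complex.I * (c:ℂ))‖ = |c| := by
    simp
  rw [h1]
  gcongr
  calc ‖Complex.exp (-(Complex.I * c) * 1) - Complex.exp (-(Complex.I * c) * 0)‖
      ≤ ‖Complex.exp (-(Complex.I * c) * 1)‖ + ‖Complex.exp (-(Complex.I * c) * 0)‖ :=
        norm_sub_le _ _
    _ ≤ 2 := by
        rw [Complex.norm_exp, Complex.norm_exp]
        norm_num

lemma Fc_prod_bound (c : ℝ) : ‖Fc c‖ * ‖Fc (-c)‖ ≤ 8 / (4 + c ^ 2) := by
  have hpos : (0:ℝ) < 4 + c ^ 2 := by positivity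
  rcases le_or_gt (c ^ 2) 4 with h | h
  · calc ‖Fc c‖ * ‖Fc (-c)‖ ≤ 1 * 1 :=
        mul_le_mul (Fc_norm_le_one c) (Fc_norm_le_one (-c)) (norm_nonneg _) zero_le_one
    _ = 1 := one_mul 1
    _ ≤ 8 / (4 + c ^ 2) := by
        rw [le_div_iff₀ hpos]; linarith
  · have hc : c ≠ 0 := by
      intro h0; rw [h0] at h; norm_num at h
    have hcabs : (0:ℝ) < |c| := abs_pos.mpr hc
    have h2 : ‖Fc (-c)‖ ≤ 2 / |c| := by
      simpa [abs_neg] using Fc_norm_le (-c) (neg_ne_zero.mpr hc)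
    have h3 : ‖Fc c‖ * ‖Fc (-c)‖ ≤ (2 / |c|) * (2 / |c|) :=
      mul_le_mul (Fc_norm_le c hc) h2 (norm_nonneg _) (by positivity)
    have h4 : (2 / |c|) * (2 / |c|) = 4 / c ^ 2 := by
      rw [div_mul_div_comm, abs_mul_abs_self]
      ring_nf
    have h5 : 4 / c ^ 2 ≤ 8 / (4 + c ^ 2) := by
      rw [div_le_div_iff₀ (by positivity) hpos]; nlinarith
    linarith

lemma inner_eq (c : ℝ) :
    (∫ za in (0:ℝ)..1, ∫ zb in (0:ℝ)..1,
      Complex.exp (-(Complex.I * ((c * (zb - za) : ℝ) : ℂ)))) = Fc c * Fc (-c) := by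
  have key : ∀ za zb : ℝ, Complex.exp (-(Complex.I * ((c * (zb - za) : ℝ) : ℂ)))
      = Complex.exp (-(Complex.I * (c : ℝ)) * zb) *
        Complex.exp (-(Complex.I * ((-c : ℝ) : ℂ)) * za) := by
    intro za zb
    rw [← Complex.exp_add]
    congr 1
    push_cast
    ring
  simp_rw [key, intervalIntegral.integral_mul_const, intervalIntegral.integral_const_mul]
  rfl

lemma yb_bound (T ya : ℝ) (hT : 1 ≤ T) :
    ∫ yb in (0:ℝ)..1, 2 * (1 + (π * T * yb - π * T * ya) ^ 2)⁻¹ ≤ 2 / T := by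
  have hT0 : (0:ℝ) < T := lt_of_lt_of_le one_pos hT
  have hπT : (0:ℝ) < π * T := by positivity
  rw [intervalIntegral.integral_const_mul]
  have hd : ∀ x ∈ Set.uIcc (0:ℝ) 1,
      HasDerivAt (fun yb => (π * T)⁻¹ * Real.arctan (π * T * yb - π * T * ya))
        ((1 + (π * T * x - π * T * ya) ^ 2)⁻¹) x := by
    intro x _
    have h1 : HasDerivAt (fun yb : ℝ => π * T * yb - π * T * ya) (π * T) x := by
      simpa using ((hasDerivAt_id x).const_mul (π * T)).sub_const (π * T * ya)
    have h2 := (Real.hasDerivAt_arctan (π * T * x - π * T * ya)).comp x h1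
    have h3 := h2.const_mul ((π * T)⁻¹)
    refine h3.congr_deriv ?_
    field_simp
  have hint : IntervalIntegrable
      (fun x : ℝ => (1 + (π * T * x - π * T * ya) ^ 2)⁻¹) MeasureTheory.volume 0 1 := by
    apply Continuous.intervalIntegrable
    apply Continuous.inv₀
    · fun_prop
    · intro x; positivity
  rw [intervalIntegral.integral_eq_sub_of_hasDerivAt hd hint]
  have hA : Real.arctan (π * T * 1 - π * T * ya) < π / 2 := Real.arctan_lt_pi_div_two _
  have hB : -(π / 2) < Real.arctan (π * T * 0 - π * T * ya) := Real.neg_pi_div_two_lt_arctan _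
  have key : (π * T)⁻¹ * Real.arctan (π * T * 1 - π * T * ya)
      - (π * T)⁻¹ * Real.arctan (π * T * 0 - π * T * ya) ≤ 1 / T := by
    have h4 : (π * T)⁻¹ * Real.arctan (π * T * 1 - π * T * ya)
        - (π * T)⁻¹ * Real.arctan (π * T * 0 - π * T * ya)
        ≤ (π * T)⁻¹ * π := by
      rw [← mul_sub]
      apply mul_le_mul_of_nonneg_left _ (le_of_lt (inv_pos.mpr hπT))
      linarith
    have h5 : (π * T)⁻¹ * π = 1 / T := by
      field_simp
    linarith
  have h6 : 2 / T = 2 * (1 / T) := by ring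
  linarith

lemma level2 (T ya : ℝ) (hT : 1 ≤ T) :
    ‖∫ yb in (0:ℝ)..1, Fc (2 * π * T * (yb - ya)) * Fc (-(2 * π * T * (yb - ya)))‖
      ≤ 2 / T := by
  have hT0 : (0:ℝ) < T := lt_of_lt_of_le one_pos hT
  calc ‖∫ yb in (0:ℝ)..1, Fc (2 * π * T * (yb - ya)) * Fc (-(2 * π * T * (yb - ya)))‖
      ≤ ∫ yb in (0:ℝ)..1, ‖Fc (2 * π * T * (yb - ya)) * Fc (-(2 * π * T * (yb - ya)))‖ :=
        intervalIntegral.norm_integral_le_integral_norm zero_le_one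
    _ ≤ ∫ yb in (0:ℝ)..1, 2 * (1 + (π * T * yb - π * T * ya) ^ 2)⁻¹ := by
        apply intervalIntegral.integral_mono_on zero_le_one
        · apply Continuous.intervalIntegrable
          apply Continuous.norm
          exact (Fc_cont.comp (by fun_prop)).mul (Fc_cont.comp (by fun_prop))
        · apply Continuous.intervalIntegrable
          apply Continuous.mul continuous_const
          apply Continuous.inv₀
          · fun_prop
          · intro x; positivity
        · intro yb _
          rw [norm_mul]
          refine le_trans (Fc_prod_bound _) (le_of_eq ?_)
          have hx : (0:ℝ) < 1 + (π * T * yb - π * T * ya) ^ 2 := by positivity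
          have h4 : 4 + (2 * π * T * (yb - ya)) ^ 2
              = 4 * (1 + (π * T * yb - π * T * ya) ^ 2) := by ring
          rw [h4]
          field_simp
          ring
    _ ≤ 2 / T := yb_bound T ya hT

theorem stmt_13 :
    ∃ K : ℝ, 0 < K ∧ ∀ T : ℝ, 1 ≤ T →
      ‖∫ ya in (0:ℝ)..1, ∫ yb in (0:ℝ)..1, ∫ za in (0:ℝ)..1, ∫ zb in (0:ℝ)..1,
          Complex.exp (-(Complex.I * ((2 * π * T * (yb - ya) * (zb - za) : ℝ) : ℂ)))‖
        ≤ K * (1 + Real.log T) / T := by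
  refine ⟨2, by norm_num, fun T hT => ?_⟩
  have hT0 : (0:ℝ) < T := lt_of_lt_of_le one_pos hT
  have hlog : (0:ℝ) ≤ Real.log T := Real.log_nonneg hT
  have step : ‖∫ ya in (0:ℝ)..1, ∫ yb in (0:ℝ)..1, ∫ za in (0:ℝ)..1, ∫ zb in (0:ℝ)..1,
      Complex.exp (-(Complex.I * ((2 * π * T * (yb - ya) * (zb - za) : ℝ) : ℂ)))‖
      ≤ (2 / T) * |(1:ℝ) - 0| := by
    apply intervalIntegral.norm_integral_le_of_norm_le_const
    intro ya _
    have h1 : (∫ yb in (0:ℝ)..1, ∫ za in (0:ℝ)..1, ∫ zb in (0:ℝ)..1,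
        Complex.exp (-(Complex.I * ((2 * π * T * (yb - ya) * (zb - za) : ℝ) : ℂ))))
        = ∫ yb in (0:ℝ)..1, Fc (2 * π * T * (yb - ya)) * Fc (-(2 * π * T * (yb - ya))) := by
      apply intervalIntegral.integral_congr
      intro yb _
      exact inner_eq (2 * π * T * (yb - ya))
    rw [h1]
    exact level2 T ya hT
  calc ‖_‖ ≤ (2 / T) * |(1:ℝ) - 0| := step
    _ = 2 / T := by norm_num
    _ ≤ 2 * (1 + Real.log T) / T := by
        rw [div_le_div_iff₀ hT0 hT0]
        nlinarith
end

section
/- There exists a constant K₇ > 0 such that the following holds. For all A_c ≥ 1 and d with √A_c ≤ d ≤ A_c, all x_a, x_b, y_a, y_b ∈ [0,1] with |y_b − y_a| ≥ (√A_c/d)·|x_b − x_a|, and all (w, z) ∈ [0,1]², the partial derivative of g_{a,b} with respect to z satisfies | ∂g_{a,b}/∂z (w, z) | ≥ K₇ · (A_c/d) · ( |y_b − y_a| − (√A_c/d)·|x_b − x_a| ). -/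
open Real Set

/-- The phase difference `‖x_a − w‖ − ‖x_b − w‖` in the normalized coordinates of the paper:
the transmit points are `(−√A_c·x, √A_c·y)` and the receive point is `(d + √A_c·w, √A_c·z)`. -/
noncomputable def gab (Ac d xa xb ya yb w z : ℝ) : ℝ :=
  Real.sqrt ((d + Real.sqrt Ac * (xa + w)) ^ 2 + Ac * (ya - z) ^ 2) -
    Real.sqrt ((d + Real.sqrt Ac * (xb + w)) ^ 2 + Ac * (yb - z) ^ 2)

private lemma hasDerivAt_phi (t : ℝ) :
    HasDerivAt (fun s : ℝ => s / Real.sqrt (1 + s^2)) (1 / ((1 + t^2) * Real.sqrt (1 + t^2))) t := by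
  have h0 : (0:ℝ) < 1 + t^2 := by positivity
  have hs0 : (0:ℝ) < Real.sqrt (1 + t^2) := Real.sqrt_pos.mpr h0
  have h1 : HasDerivAt (fun s : ℝ => 1 + s^2) (2*t) t := by
    simpa using ((hasDerivAt_pow 2 t).const_add 1)
  have h2 : HasDerivAt (fun s : ℝ => Real.sqrt (1 + s^2)) (2*t / (2 * Real.sqrt (1+t^2))) t :=
    h1.sqrt h0.ne'
  have h3 := (hasDerivAt_id t).div h2 hs0.ne'
  refine h3.congr_deriv (Eq.symm ?_)
  have hsq : Real.sqrt (1+t^2)^2 = 1 + t^2 := Real.sq_sqrt h0.le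
  field_simp
  simp only [id_eq]
  linear_combination (-t^2) * hsq

private lemma phi_lb {a b : ℝ} (ha : -1 ≤ a) (hab : a ≤ b) (hb : b ≤ 1) :
    (b - a) / (2 * Real.sqrt 2) ≤ b / Real.sqrt (1 + b^2) - a / Real.sqrt (1 + a^2) := by
  rcases eq_or_lt_of_le hab with rfl | hlt
  · simp
  obtain ⟨c, hc, hceq⟩ := exists_hasDerivAt_eq_slope (fun s : ℝ => s / Real.sqrt (1 + s^2))
      (fun t => 1 / ((1 + t^2) * Real.sqrt (1 + t^2))) hlt
      (fun x _ => (hasDerivAt_phi x).continuousAt.continuousWithinAt)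
      (fun x _ => hasDerivAt_phi x)
  have hc1 : -1 < c := lt_of_le_of_lt ha hc.1
  have hc2 : c < 1 := lt_of_lt_of_le hc.2 hb
  have hcc : (1:ℝ) + c^2 ≤ 2 := by nlinarith
  have h2 : Real.sqrt (1 + c^2) ≤ Real.sqrt 2 := Real.sqrt_le_sqrt hcc
  have hs2 : (0:ℝ) < Real.sqrt 2 := by positivity
  have hsc : (0:ℝ) < Real.sqrt (1 + c^2) := Real.sqrt_pos.mpr (by positivity)
  have hprod : (1 + c^2) * Real.sqrt (1 + c^2) ≤ 2 * Real.sqrt 2 := by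
    apply mul_le_mul hcc h2 hsc.le (by norm_num)
  have hlb : 1 / (2 * Real.sqrt 2) ≤ 1 / ((1 + c^2) * Real.sqrt (1 + c^2)) :=
    one_div_le_one_div_of_le (by positivity) hprod
  have := hceq ▸ hlb
  calc (b - a) / (2 * Real.sqrt 2) = (1 / (2 * Real.sqrt 2)) * (b - a) := by ring
    _ ≤ ((b / Real.sqrt (1 + b^2) - a / Real.sqrt (1 + a^2)) / (b - a)) * (b - a) := by
        apply mul_le_mul_of_nonneg_right this (by linarith)
    _ = b / Real.sqrt (1 + b^2) - a / Real.sqrt (1 + a^2) :=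
        div_mul_cancel₀ _ (sub_ne_zero.mpr hlt.ne')

private lemma ident {sA u p : ℝ} (hsA : 0 < sA) (hu : 0 < u) :
    sA^2 * p / Real.sqrt (u^2 + sA^2*p^2) = sA * ((sA*p/u) / Real.sqrt (1 + (sA*p/u)^2)) := by
  have h : 1 + (sA*p/u)^2 = (u^2 + sA^2*p^2)/u^2 := by field_simp
  rw [h, Real.sqrt_div (by positivity), Real.sqrt_sq hu.le]
  have hr : 0 < Real.sqrt (u^2 + sA^2*p^2) := Real.sqrt_pos.mpr (by positivity)
  field_simp

private lemma key {Ac d u v p q : ℝ} (hAc : 1 ≤ Ac) (hd : Real.sqrt Ac ≤ d)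
    (hu : d ≤ u) (hv : d ≤ v) (hv3 : v ≤ 3*d) (hp : |p| ≤ 1) (hq : |q| ≤ 1)
    (hs : |v - u| / d ≤ q - p) :
    1/9 * (Ac/d) * ((q - p) - |v - u| / d) ≤
      Ac * q / Real.sqrt (v^2 + Ac*q^2) - Ac * p / Real.sqrt (u^2 + Ac*p^2) := by
  set sA := Real.sqrt Ac with hsA_def
  have hsA1 : 1 ≤ sA := by
    rw [hsA_def, show (1:ℝ) = Real.sqrt 1 from (Real.sqrt_one).symm]
    exact Real.sqrt_le_sqrt hAc
  have hsA0 : 0 < sA := by linarith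
  have hAs : sA^2 = Ac := Real.sq_sqrt (by linarith)
  have hd0 : (0:ℝ) < d := by linarith
  have hu0 : (0:ℝ) < u := by linarith
  have hv0 : (0:ℝ) < v := by linarith
  set s := |v - u| with hs_def
  have hs0 : (0:ℝ) ≤ s := abs_nonneg _
  set X := (q - p) - s / d with hX_def
  have hX : (0:ℝ) ≤ X := by simp only [hX_def]; linarith
  set ta := sA*p/u with hta_def
  set tb := sA*q/v with htb_def
  have hta1 : |ta| ≤ 1 := by
    rw [hta_def, abs_div, abs_mul, abs_of_pos hsA0, abs_of_pos hu0, div_le_one hu0]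
    nlinarith
  have htb1 : |tb| ≤ 1 := by
    rw [htb_def, abs_div, abs_mul, abs_of_pos hsA0, abs_of_pos hv0, div_le_one hv0]
    nlinarith
  have habs : -s ≤ p * (u - v) := by
    have h1 : |p * (u - v)| ≤ s := by
      rw [abs_mul, hs_def, abs_sub_comm v u]
      nlinarith [abs_nonneg (u - v), abs_nonneg p]
    linarith [neg_abs_le (p * (u - v))]
  have hkey1 : sA * X / v ≤ tb - ta := by
    have hfrac : tb - ta = (sA*q*u - sA*p*v)/(v*u) := by
      rw [htb_def, hta_def]; field_simp
    rw [hfrac, hX_def, show sA * ((q - p) - s/d) / v = (sA*((q-p)*d - s))/(d*v) by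
      field_simp, div_le_div_iff₀ (by positivity) (by positivity)]
    nlinarith [mul_nonneg (mul_nonneg (mul_nonneg hsA0.le hd0.le) hv0.le)
        (by linarith : (0:ℝ) ≤ p*(u-v) + s),
      mul_nonneg (mul_nonneg (mul_nonneg hsA0.le hs0) hv0.le) (by linarith : (0:ℝ) ≤ u - d)]
  have htatb : ta ≤ tb := by
    have h0 : (0:ℝ) ≤ sA * X / v := by positivity
    linarith
  have hphi := phi_lb (neg_le_of_abs_le hta1) htatb (le_of_abs_le htb1)
  have hs2 : (0:ℝ) < Real.sqrt 2 := by positivity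
  have hs2' : Real.sqrt 2 ≤ 1.5 := by
    rw [show (1.5:ℝ) = Real.sqrt (1.5^2) from (Real.sqrt_sq (by norm_num)).symm]
    exact Real.sqrt_le_sqrt (by norm_num)
  have h9 : 2*Real.sqrt 2*v ≤ 9*d := by nlinarith
  have hmono : 1/(9*d) ≤ 1/(2*Real.sqrt 2*v) := one_div_le_one_div_of_le (by positivity) h9
  have hident_a := ident (p := p) hsA0 hu0
  have hident_b := ident (p := q) hsA0 hv0
  have hAcX : (0:ℝ) ≤ Ac * X := by positivity
  calc 1/9 * (Ac/d) * X = (Ac*X) * (1/(9*d)) := by ring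
    _ ≤ (Ac*X) * (1/(2*Real.sqrt 2*v)) := mul_le_mul_of_nonneg_left hmono hAcX
    _ = sA * (sA * X / v / (2*Real.sqrt 2)) := by
        rw [← hAs]; field_simp
    _ ≤ sA * ((tb - ta) / (2*Real.sqrt 2)) := by
        gcongr
    _ ≤ sA * (tb / Real.sqrt (1 + tb^2) - ta / Real.sqrt (1 + ta^2)) :=
        mul_le_mul_of_nonneg_left hphi hsA0.le
    _ = Ac * q / Real.sqrt (v^2 + Ac*q^2) - Ac * p / Real.sqrt (u^2 + Ac*p^2) := by
        rw [← hAs, hident_a, hident_b]; ring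

private lemma sqrt_deriv_aux (A Ac ya z : ℝ) (hA : A + Ac * (ya - z) ^ 2 ≠ 0) :
    HasDerivAt (fun t : ℝ => Real.sqrt (A + Ac * (ya - t) ^ 2))
      ((Ac * (2 * (ya - z) ^ 1 * (-1))) / (2 * Real.sqrt (A + Ac * (ya - z) ^ 2))) z :=
  ((((hasDerivAt_id z).const_sub ya).pow 2).const_mul Ac |>.const_add A).sqrt hA

set_option maxHeartbeats 1600000 in
theorem stmt_15 :
    ∃ K₇ : ℝ, 0 < K₇ ∧
      ∀ Ac d : ℝ, 1 ≤ Ac → Real.sqrt Ac ≤ d → d ≤ Ac →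
      ∀ xa ∈ Set.Icc (0:ℝ) 1, ∀ xb ∈ Set.Icc (0:ℝ) 1,
      ∀ ya ∈ Set.Icc (0:ℝ) 1, ∀ yb ∈ Set.Icc (0:ℝ) 1,
      Real.sqrt Ac / d * |xb - xa| ≤ |yb - ya| →
      ∀ w ∈ Set.Icc (0:ℝ) 1, ∀ z ∈ Set.Icc (0:ℝ) 1,
        K₇ * (Ac / d) * (|yb - ya| - Real.sqrt Ac / d * |xb - xa|) ≤
          |deriv (fun t => gab Ac d xa xb ya yb w t) z| := by
  refine ⟨1/9, by norm_num, ?_⟩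
  intro Ac d hAc hdl hdu xa hxa xb hxb ya hya yb hyb hsep w hw z hz
  obtain ⟨hxa0, hxa1⟩ := hxa
  obtain ⟨hxb0, hxb1⟩ := hxb
  obtain ⟨hya0, hya1⟩ := hya
  obtain ⟨hyb0, hyb1⟩ := hyb
  obtain ⟨hw0, hw1⟩ := hw
  obtain ⟨hz0, hz1⟩ := hz
  have hsA1 : 1 ≤ Real.sqrt Ac := by
    rw [show (1:ℝ) = Real.sqrt 1 from (Real.sqrt_one).symm]
    exact Real.sqrt_le_sqrt hAc
  have hsA0 : (0:ℝ) < Real.sqrt Ac := by linarith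
  have hd0 : (0:ℝ) < d := by linarith
  set Ca := d + Real.sqrt Ac * (xa + w) with hCadef
  set Cb := d + Real.sqrt Ac * (xb + w) with hCbdef
  have hCa_lb : d ≤ Ca := by
    have : 0 ≤ Real.sqrt Ac * (xa + w) := by positivity
    simp only [hCadef]; linarith
  have hCb_lb : d ≤ Cb := by
    have : 0 ≤ Real.sqrt Ac * (xb + w) := by positivity
    simp only [hCbdef]; linarith
  have hCa_ub : Ca ≤ 3 * d := by
    have : Real.sqrt Ac * (xa + w) ≤ Real.sqrt Ac * 2 := by nlinarith
    simp only [hCadef]; nlinarith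
  have hCb_ub : Cb ≤ 3 * d := by
    have : Real.sqrt Ac * (xb + w) ≤ Real.sqrt Ac * 2 := by nlinarith
    simp only [hCbdef]; nlinarith
  have hCa0 : (0:ℝ) < Ca := lt_of_lt_of_le hd0 hCa_lb
  have hCb0 : (0:ℝ) < Cb := lt_of_lt_of_le hd0 hCb_lb
  have hAc0 : (0:ℝ) < Ac := by linarith
  have hnea : Ca ^ 2 + Ac * (ya - z) ^ 2 ≠ 0 := by
    nlinarith [mul_nonneg hAc0.le (sq_nonneg (ya - z)), sq_nonneg Ca]
  have hneb : Cb ^ 2 + Ac * (yb - z) ^ 2 ≠ 0 := by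
    nlinarith [mul_nonneg hAc0.le (sq_nonneg (yb - z)), sq_nonneg Cb]
  have hra : (0:ℝ) < Real.sqrt (Ca ^ 2 + Ac * (ya - z) ^ 2) :=
    Real.sqrt_pos.mpr (lt_of_le_of_ne (by positivity) (Ne.symm hnea))
  have hrb : (0:ℝ) < Real.sqrt (Cb ^ 2 + Ac * (yb - z) ^ 2) :=
    Real.sqrt_pos.mpr (lt_of_le_of_ne (by positivity) (Ne.symm hneb))
  have hD : HasDerivAt (fun t => gab Ac d xa xb ya yb w t)
      (Ac * (yb - z) / Real.sqrt (Cb ^ 2 + Ac * (yb - z) ^ 2) -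
       Ac * (ya - z) / Real.sqrt (Ca ^ 2 + Ac * (ya - z) ^ 2)) z := by
    have ha := sqrt_deriv_aux (Ca ^ 2) Ac ya z hnea
    have hb := sqrt_deriv_aux (Cb ^ 2) Ac yb z hneb
    have := ha.sub hb
    refine this.congr_deriv (Eq.symm ?_)
    ring
  rw [hD.deriv]
  set D := Ac * (yb - z) / Real.sqrt (Cb ^ 2 + Ac * (yb - z) ^ 2) -
       Ac * (ya - z) / Real.sqrt (Ca ^ 2 + Ac * (ya - z) ^ 2) with hDdef
  have hCbCa : |Cb - Ca| = Real.sqrt Ac * |xb - xa| := by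
    rw [show Cb - Ca = Real.sqrt Ac * (xb - xa) by simp only [hCadef, hCbdef]; ring,
      abs_mul, abs_of_nonneg hsA0.le]
  have hCaCb : |Ca - Cb| = Real.sqrt Ac * |xb - xa| := by
    rw [abs_sub_comm]; exact hCbCa
  rcases le_total ya yb with hyab | hyab
  · -- yb ≥ ya
    have habs_y : |yb - ya| = (yb - z) - (ya - z) := by
      rw [abs_of_nonneg (by linarith)]; ring
    have harg : |Cb - Ca| / d ≤ (yb - z) - (ya - z) := by
      rw [hCbCa]; rw [habs_y] at hsep
      calc Real.sqrt Ac * |xb - xa| / d = Real.sqrt Ac / d * |xb - xa| := by ring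
        _ ≤ _ := hsep
    have h := key (u := Ca) (v := Cb) (p := ya - z) (q := yb - z) hAc hdl hCa_lb hCb_lb hCb_ub
      (abs_le.mpr ⟨by linarith, by linarith⟩) (abs_le.mpr ⟨by linarith, by linarith⟩) harg
    have hle : 1/9 * (Ac/d) * (|yb - ya| - Real.sqrt Ac / d * |xb - xa|) ≤ D := by
      calc 1/9 * (Ac/d) * (|yb - ya| - Real.sqrt Ac / d * |xb - xa|)
          = 1/9 * (Ac/d) * (((yb - z) - (ya - z)) - |Cb - Ca| / d) := by
            rw [habs_y, hCbCa]; ring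
        _ ≤ D := h
    exact hle.trans (le_abs_self D)
  · -- ya ≥ yb
    have habs_y : |yb - ya| = (ya - z) - (yb - z) := by
      rw [abs_of_nonpos (by linarith)]; ring
    have harg : |Ca - Cb| / d ≤ (ya - z) - (yb - z) := by
      rw [hCaCb]; rw [habs_y] at hsep
      calc Real.sqrt Ac * |xb - xa| / d = Real.sqrt Ac / d * |xb - xa| := by ring
        _ ≤ _ := hsep
    have h := key (u := Cb) (v := Ca) (p := yb - z) (q := ya - z) hAc hdl hCb_lb hCa_lb hCa_ub
      (abs_le.mpr ⟨by linarith, by linarith⟩) (abs_le.mpr ⟨by linarith, by linarith⟩) harg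
    have hle : 1/9 * (Ac/d) * (|yb - ya| - Real.sqrt Ac / d * |xb - xa|) ≤ -D := by
      calc 1/9 * (Ac/d) * (|yb - ya| - Real.sqrt Ac / d * |xb - xa|)
          = 1/9 * (Ac/d) * (((ya - z) - (yb - z)) - |Ca - Cb| / d) := by
            rw [habs_y, hCaCb]; ring
        _ ≤ -D := by rw [hDdef]; linarith [h]
    exact hle.trans (neg_le_abs D)
end

section
/- There exists a constant K₉ > 0 such that the following holds. For all A_c ≥ 1 and d with √A_c ≤ d ≤ A_c, all x_a, x_b ∈ [0,1] and y_a ∈ [0,1], and all (w, z) ∈ [0,1]², if y_b = y_a then the partial derivative of g_{a,b} with respect to z satisfies | ∂g_{a,b}/∂z (w, z) | ≥ K₉ · (A_c^{3/2}/d²) · |x_b − x_a| · |z − y_a|. -/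
open Real Set

lemma sqrt_aux {A y c : ℝ} (z : ℝ) (h : 0 < c ^ 2 + A * (y - z) ^ 2) :
    HasDerivAt (fun t => Real.sqrt (c ^ 2 + A * (y - t) ^ 2))
      (A * (z - y) / Real.sqrt (c ^ 2 + A * (y - z) ^ 2)) z := by
  have hy : HasDerivAt (fun t : ℝ => y - t) (-1) z := by
    simpa using (hasDerivAt_id z).const_sub y
  have h1 : HasDerivAt (fun t : ℝ => c ^ 2 + A * (y - t) ^ 2)
      (A * (((2:ℕ) : ℝ) * (y - z) ^ 1 * (-1))) z :=
    ((hy.pow 2).const_mul A).const_add (c ^ 2)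
  have h2 := (Real.hasDerivAt_sqrt h.ne').comp z h1
  have hs : Real.sqrt (c ^ 2 + A * (y - z) ^ 2) ≠ 0 := (Real.sqrt_pos.mpr h).ne'
  refine h2.congr_deriv ?_
  field_simp
  ring

set_option maxHeartbeats 1600000 in
theorem stmt_16 :
    ∃ K₉ : ℝ, 0 < K₉ ∧
      ∀ Ac d : ℝ, 1 ≤ Ac → Real.sqrt Ac ≤ d → d ≤ Ac →
      ∀ xa ∈ Set.Icc (0:ℝ) 1, ∀ xb ∈ Set.Icc (0:ℝ) 1, ∀ ya ∈ Set.Icc (0:ℝ) 1,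
      ∀ yb : ℝ, yb = ya →
      ∀ w ∈ Set.Icc (0:ℝ) 1, ∀ z ∈ Set.Icc (0:ℝ) 1,
        K₉ * (Ac ^ ((3:ℝ)/2) / d ^ 2) * |xb - xa| * |z - ya| ≤
          |deriv (fun t => gab Ac d xa xb ya yb w t) z| := by
  refine ⟨1/64, by norm_num, ?_⟩
  intro Ac d hAc hdl hdu xa hxa xb hxb ya hya yb hyb w hw z hz
  obtain ⟨hxa0, hxa1⟩ := hxa
  obtain ⟨hxb0, hxb1⟩ := hxb
  obtain ⟨hya0, hya1⟩ := hya
  obtain ⟨hw0, hw1⟩ := hw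
  obtain ⟨hz0, hz1⟩ := hz
  subst hyb
  have hA0 : (0:ℝ) < Ac := by linarith
  have hsA0 : (0:ℝ) ≤ Real.sqrt Ac := Real.sqrt_nonneg _
  have hsA1 : (1:ℝ) ≤ Real.sqrt Ac := by
    rw [show (1:ℝ) = Real.sqrt 1 by simp]
    exact Real.sqrt_le_sqrt hAc
  have hd : (0:ℝ) < d := by linarith
  set c1 := d + Real.sqrt Ac * (xa + w) with hc1def
  set c2 := d + Real.sqrt Ac * (xb + w) with hc2def
  have hc1l : d ≤ c1 := by nlinarith [mul_nonneg hsA0 (by linarith : (0:ℝ) ≤ xa + w)]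
  have hc2l : d ≤ c2 := by nlinarith [mul_nonneg hsA0 (by linarith : (0:ℝ) ≤ xb + w)]
  have hc1u : c1 ≤ 3 * d := by nlinarith [mul_le_mul hdl (by linarith : xa + w ≤ 2) (by linarith) hd.le]
  have hc2u : c2 ≤ 3 * d := by nlinarith [mul_le_mul hdl (by linarith : xb + w ≤ 2) (by linarith) hd.le]
  clear_value c1 c2
  have hAd : Ac ≤ d ^ 2 := by nlinarith [Real.sq_sqrt hA0.le]
  have hu0 : 0 ≤ Ac * (yb - z) ^ 2 := by positivity
  have huu : Ac * (yb - z) ^ 2 ≤ d ^ 2 := by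
    have h1 : (yb - z) ^ 2 ≤ 1 := by nlinarith
    nlinarith [mul_le_mul_of_nonneg_left h1 hA0.le]
  have hv1 : (0:ℝ) < c1 ^ 2 + Ac * (yb - z) ^ 2 := by
    have h := pow_le_pow_left₀ hd.le hc1l 2
    linarith [pow_pos hd 2]
  have hv2 : (0:ℝ) < c2 ^ 2 + Ac * (yb - z) ^ 2 := by
    have h := pow_le_pow_left₀ hd.le hc2l 2
    linarith [pow_pos hd 2]
  have hv1u : c1 ^ 2 + Ac * (yb - z) ^ 2 ≤ (4 * d) ^ 2 := by
    nlinarith [mul_self_le_mul_self (by linarith : (0:ℝ) ≤ c1) hc1u]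
  have hv2u : c2 ^ 2 + Ac * (yb - z) ^ 2 ≤ (4 * d) ^ 2 := by
    nlinarith [mul_self_le_mul_self (by linarith : (0:ℝ) ≤ c2) hc2u]
  set r1 := Real.sqrt (c1 ^ 2 + Ac * (yb - z) ^ 2) with hr1def
  set r2 := Real.sqrt (c2 ^ 2 + Ac * (yb - z) ^ 2) with hr2def
  have hr1p : 0 < r1 := Real.sqrt_pos.mpr hv1
  have hr2p : 0 < r2 := Real.sqrt_pos.mpr hv2
  have hr1sq : r1 ^ 2 = c1 ^ 2 + Ac * (yb - z) ^ 2 := Real.sq_sqrt hv1.le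
  have hr2sq : r2 ^ 2 = c2 ^ 2 + Ac * (yb - z) ^ 2 := Real.sq_sqrt hv2.le
  clear_value r1 r2
  have hr1u : r1 ≤ 4 * d := by
    have h := Real.sqrt_le_sqrt hv1u
    rw [Real.sqrt_sq (by positivity : (0:ℝ) ≤ 4 * d)] at h
    rw [hr1def]; exact h
  have hr2u : r2 ≤ 4 * d := by
    have h := Real.sqrt_le_sqrt hv2u
    rw [Real.sqrt_sq (by positivity : (0:ℝ) ≤ 4 * d)] at h
    rw [hr2def]; exact h
  -- the derivative
  have hder : deriv (fun t => gab Ac d xa xb yb yb w t) z =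
      Ac * (z - yb) / r1 - Ac * (z - yb) / r2 := by
    have h1 := sqrt_aux (A := Ac) (y := yb) (c := c1) z hv1
    have h2 := sqrt_aux (A := Ac) (y := yb) (c := c2) z hv2
    have : (fun t => gab Ac d xa xb yb yb w t) =
        (fun t => Real.sqrt (c1 ^ 2 + Ac * (yb - t) ^ 2) -
          Real.sqrt (c2 ^ 2 + Ac * (yb - t) ^ 2)) := by
      funext t
      simp [gab, hc1def, hc2def]
    rw [this, hr1def, hr2def]
    exact (h1.sub h2).deriv
  -- exact formula for the difference r2 - r1
  have hdiff : r2 - r1 = Real.sqrt Ac * (xb - xa) * (c1 + c2) / (r1 + r2) := by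
    rw [eq_div_iff (by positivity : r1 + r2 ≠ 0)]
    have hc : c2 ^ 2 - c1 ^ 2 = Real.sqrt Ac * (xb - xa) * (c1 + c2) := by
      rw [hc1def, hc2def]; ring
    linear_combination hr2sq - hr1sq + hc
  have hE : deriv (fun t => gab Ac d xa xb yb yb w t) z =
      (Ac * Real.sqrt Ac * (c1 + c2) / ((r1 + r2) * (r1 * r2))) * ((z - yb) * (xb - xa)) := by
    rw [hder]
    have h1 : Ac * (z - yb) / r1 - Ac * (z - yb) / r2 =
        Ac * (z - yb) * (r2 - r1) / (r1 * r2) := by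
      field_simp
    rw [h1, hdiff]
    field_simp
  rw [hE, abs_mul, abs_mul]
  have hden : 0 < (r1 + r2) * (r1 * r2) := mul_pos (by linarith) (mul_pos hr1p hr2p)
  have hnum : 0 ≤ Ac * Real.sqrt Ac * (c1 + c2) :=
    mul_nonneg (mul_nonneg hA0.le hsA0) (by linarith)
  have hC0 : 0 ≤ Ac * Real.sqrt Ac * (c1 + c2) / ((r1 + r2) * (r1 * r2)) :=
    div_nonneg hnum hden.le
  rw [abs_of_nonneg hC0]
  have hAc32 : Ac ^ ((3:ℝ)/2) = Ac * Real.sqrt Ac := by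
    rw [show (3:ℝ)/2 = 1 + 1/2 by norm_num, Real.rpow_add hA0, Real.rpow_one,
      ← Real.sqrt_eq_rpow]
  rw [hAc32]
  have hC : Ac * Real.sqrt Ac * (2 * d) / (128 * d ^ 3) ≤
      Ac * Real.sqrt Ac * (c1 + c2) / ((r1 + r2) * (r1 * r2)) := by
    apply div_le_div₀ hnum
    · nlinarith [mul_nonneg hA0.le hsA0]
    · exact hden
    · nlinarith [mul_pos hr1p hr2p, mul_nonneg hr1p.le hr2p.le]
  calc 1 / 64 * (Ac * Real.sqrt Ac / d ^ 2) * |xb - xa| * |z - yb|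
      = Ac * Real.sqrt Ac * (2 * d) / (128 * d ^ 3) * (|z - yb| * |xb - xa|) := by
        field_simp; ring
    _ ≤ Ac * Real.sqrt Ac * (c1 + c2) / ((r1 + r2) * (r1 * r2)) * (|z - yb| * |xb - xa|) := by
        apply mul_le_mul_of_nonneg_right hC (by positivity)
end

section
/- There exists a constant K₈ > 0 such that the following holds. For all A_c ≥ 1 and d with √A_c ≤ d ≤ A_c, and all x_a, x_b, y_a, y_b ∈ [0,1] with |y_b − y_a| > (√A_c/d)·|x_b − x_a|, one has | ∫₀¹ ∫₀¹ e^{2πi g_{a,b}(w,z)} / G_{a,b}(w,z) dw dz | ≤ K₈ · (d/A_c) / ( |y_b − y_a| − (√A_c/d)·|x_b − x_a| ). -/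
open Real Set

/-- The normalized product of distances `‖x_a − w‖·‖x_b − w‖/d²` in the same coordinates. -/
noncomputable def Gab (Ac d xa xb ya yb w z : ℝ) : ℝ :=
  d⁻¹ ^ 2 * Real.sqrt ((d + Real.sqrt Ac * (xa + w)) ^ 2 + Ac * (ya - z) ^ 2) *
    Real.sqrt ((d + Real.sqrt Ac * (xb + w)) ^ 2 + Ac * (yb - z) ^ 2)

/-- distance function -/
noncomputable def rr (A c y z : ℝ) : ℝ := Real.sqrt (c^2 + A*(y-z)^2)

lemma rr_pos {A c : ℝ} (hA : 0 ≤ A) (hc : 0 < c) (y z : ℝ) : 0 < rr A c y z := by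
  apply Real.sqrt_pos.mpr; positivity

lemma rr_sq {A : ℝ} (hA : 0 ≤ A) (c y z : ℝ) : (rr A c y z)^2 = c^2 + A*(y-z)^2 := by
  apply Real.sq_sqrt; positivity

lemma rr_ge {A c d : ℝ} (hA : 0 ≤ A) (hd : 0 ≤ d) (hdc : d ≤ c) (y z : ℝ) :
    d ≤ rr A c y z := by
  rw [show d = Real.sqrt (d^2) from (Real.sqrt_sq hd).symm]
  apply Real.sqrt_le_sqrt; nlinarith

lemma rr_cont (A c y : ℝ) : Continuous (rr A c y) := by
  apply Continuous.comp Real.continuous_sqrt; fun_prop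

lemma rr_deriv {A c : ℝ} (hA : 0 ≤ A) (hc : 0 < c) (y z : ℝ) :
    HasDerivAt (rr A c y) (A*(z-y)/rr A c y z) z := by
  have h0 : HasDerivAt (fun t : ℝ => c^2 + A*(y-t)^2) (2*A*(z-y)) z := by
    have h1 : HasDerivAt (fun t : ℝ => y - t) (-1) z := (hasDerivAt_id z).const_sub y
    have h2 := (h1.pow 2).const_mul A |>.const_add (c^2)
    refine h2.congr_deriv ?_; ring
  have h3 : (c^2 + A*(y-z)^2) ≠ 0 := by positivity
  have h4 := h0.sqrt h3
  refine h4.congr_deriv ?_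
  rw [rr]; ring

/-- the function N -/
noncomputable def NN (A P Q ya yb z : ℝ) : ℝ :=
  (z-ya)*rr A Q yb z - (z-yb)*rr A P ya z

/-- derivative of N -/
noncomputable def NN' (A P Q ya yb z : ℝ) : ℝ :=
  (rr A Q yb z + (z-ya)*(A*(z-yb)/rr A Q yb z))
    - (rr A P ya z + (z-yb)*(A*(z-ya)/rr A P ya z))

lemma NN_deriv {A P Q : ℝ} (hA : 0 ≤ A) (hP : 0 < P) (hQ : 0 < Q) (ya yb z : ℝ) :
    HasDerivAt (fun t => NN A P Q ya yb t) (NN' A P Q ya yb z) z := by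
  have h1 : HasDerivAt (fun t : ℝ => t - ya) 1 z := (hasDerivAt_id z).sub_const ya
  have h2 : HasDerivAt (fun t : ℝ => t - yb) 1 z := (hasDerivAt_id z).sub_const yb
  have h3 := (h1.mul (rr_deriv hA hQ yb z)).sub (h2.mul (rr_deriv hA hP ya z))
  refine h3.congr_deriv ?_
  rw [NN']; ring

lemma NN_cont (A P Q ya yb : ℝ) : Continuous (fun z => NN A P Q ya yb z) := by
  apply Continuous.sub
  · exact (continuous_id.sub continuous_const).mul (rr_cont A Q yb)
  · exact (continuous_id.sub continuous_const).mul (rr_cont A P ya)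

lemma NN'_cont {A P Q : ℝ} (hA : 0 ≤ A) (hP : 0 < P) (hQ : 0 < Q) (ya yb : ℝ) :
    Continuous (fun z => NN' A P Q ya yb z) := by
  apply Continuous.sub
  · exact (rr_cont A Q yb).add (((continuous_id.sub continuous_const)).mul
      (((continuous_const.mul (continuous_id.sub continuous_const))).div (rr_cont A Q yb)
        (fun z => (rr_pos hA hQ yb z).ne')))
  · exact (rr_cont A P ya).add (((continuous_id.sub continuous_const)).mul
      (((continuous_const.mul (continuous_id.sub continuous_const))).div (rr_cont A P ya)
        (fun z => (rr_pos hA hP ya z).ne')))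

lemma NN'_factor {A P Q : ℝ} (hA : 0 ≤ A) (hP : 0 < P) (hQ : 0 < Q) (ya yb z : ℝ) :
    NN' A P Q ya yb z =
      (rr A Q yb z - rr A P ya z) * (rr A P ya z * rr A Q yb z - A*(z-ya)*(z-yb))
        / (rr A P ya z * rr A Q yb z) := by
  have ha := (rr_pos hA hP ya z).ne'
  have hb := (rr_pos hA hQ yb z).ne'
  rw [NN']; field_simp; ring

lemma NN'_M {A P Q : ℝ} (hA : 0 ≤ A) (hP : 0 < P) (hQ : 0 < Q) (ya yb z : ℝ) :
    0 ≤ rr A P ya z * rr A Q yb z - A*(z-ya)*(z-yb) := by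
  have ha := rr_pos hA hP ya z
  have hb := rr_pos hA hQ yb z
  have h1 : (A*(z-ya)*(z-yb))^2 ≤ (rr A P ya z * rr A Q yb z)^2 := by
    have e1 := rr_sq hA P ya z
    have e2 := rr_sq hA Q yb z
    have e3 : (rr A P ya z * rr A Q yb z)^2 = (P^2 + A*(ya-z)^2)*(Q^2 + A*(yb-z)^2) := by
      rw [mul_pow, e1, e2]
    rw [e3]
    nlinarith [sq_nonneg (P*Q), sq_nonneg (P*(yb-z)), sq_nonneg (Q*(ya-z)), mul_pos hP hQ,
      sq_nonneg (ya-z), sq_nonneg (yb-z)]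
  have h2 : |A*(z-ya)*(z-yb)| ≤ rr A P ya z * rr A Q yb z := by
    have h3 := Real.sqrt_le_sqrt h1
    rwa [Real.sqrt_sq_eq_abs, Real.sqrt_sq (by positivity)] at h3
  have := le_abs_self (A*(z-ya)*(z-yb))
  linarith

lemma rr_le {A c d : ℝ} (hA : 0 ≤ A) (hd : 0 < d) (hdc : d ≤ c) (hAd : A ≤ d^2)
    {y z : ℝ} (hy : y ∈ Set.Icc (0:ℝ) 1) (hz : z ∈ Set.Icc (0:ℝ) 1) :
    rr A c y z ≤ 3/2 * c := by
  have h1 : (y - z)^2 ≤ 1 := by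
    obtain ⟨h1,h2⟩ := hy; obtain ⟨h3,h4⟩ := hz; nlinarith
  have h2 : c^2 + A*(y-z)^2 ≤ (3/2*c)^2 := by
    nlinarith [mul_le_mul_of_nonneg_left h1 hA]
  calc rr A c y z ≤ Real.sqrt ((3/2*c)^2) := Real.sqrt_le_sqrt h2
    _ = 3/2*c := Real.sqrt_sq (by linarith)

set_option maxHeartbeats 1000000 in
/-- Key lower bound -/
lemma NN_lower {A d P Q s xa xb ya yb : ℝ}
    (hA : 1 ≤ A) (hs : s = Real.sqrt A) (hsd : s ≤ d) (h1s : 1 ≤ s)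
    (hPl : d ≤ P) (hQl : d ≤ Q) (hPu : P ≤ 3*d) (hQu : Q ≤ 3*d)
    (hQP : Q - P = s * (xb - xa))
    (hya : ya ∈ Set.Icc (0:ℝ) 1) (hyb : yb ∈ Set.Icc (0:ℝ) 1)
    (hlt : s / d * |xb - xa| < yb - ya)
    {z : ℝ} (hz : z ∈ Set.Icc (0:ℝ) 1) :
    d * ((yb - ya) - s/d*|xb-xa|) / 2 ≤ |NN A P Q ya yb z| := by
  have hd0 : (0:ℝ) < d := lt_of_lt_of_le one_pos (le_trans h1s hsd)
  have hA0 : (0:ℝ) < A := lt_of_lt_of_le one_pos hA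
  have hAd : A ≤ d^2 := by
    have : s^2 = A := by rw [hs]; exact Real.sq_sqrt hA0.le
    nlinarith
  obtain ⟨hya1, hya2⟩ := hya
  obtain ⟨hyb1, hyb2⟩ := hyb
  obtain ⟨hz1, hz2⟩ := hz
  have hxx : 0 ≤ s/d*|xb-xa| := by positivity
  set Δ : ℝ := (yb - ya) - s/d*|xb-xa| with hΔdef
  have hΔ : 0 < Δ := by rw [hΔdef]; linarith
  have hΔy0 : 0 < yb - ya := by linarith
  have hdΔ : 0 < d*Δ := mul_pos hd0 hΔ
  clear_value Δ
  set α : ℝ := z - ya with hα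
  set β : ℝ := z - yb with hβ
  clear_value α β
  have hαβ : α - β = yb - ya := by rw [hα, hβ]; ring
  have habsα : |α| ≤ 1 := by rw [abs_le, hα]; constructor <;> linarith
  have habsβ : |β| ≤ 1 := by rw [abs_le, hβ]; constructor <;> linarith
  have hra := rr_ge hA0.le hd0.le hPl ya z
  have hrb := rr_ge hA0.le hd0.le hQl yb z
  have hra' := rr_le hA0.le hd0 hPl hAd ⟨hya1, hya2⟩ ⟨hz1, hz2⟩
  have hrb' := rr_le hA0.le hd0 hQl hAd ⟨hyb1, hyb2⟩ ⟨hz1, hz2⟩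
  have hrapos : 0 < rr A P ya z := lt_of_lt_of_le hd0 hra
  have hrbpos : 0 < rr A Q yb z := lt_of_lt_of_le hd0 hrb
  -- lower bound on |αQ - βP|
  have hT : d * Δ ≤ |α*Q - β*P| := by
    have e1 : α*Q - β*P = (yb-ya)*Q + β*(Q-P) := by rw [← hαβ]; ring
    have e2 : |β*(Q-P)| ≤ s*|xb-xa| := by
      rw [hQP, abs_mul, abs_mul, abs_of_nonneg (by linarith : (0:ℝ) ≤ s)]
      have h0 : 0 ≤ s * |xb-xa| := by positivity
      nlinarith [abs_nonneg (xb-xa)]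
    have e3 : d*Δ ≤ (yb-ya)*Q - |β*(Q-P)| := by
      have e4 : d*Δ = d*(yb-ya) - s*|xb-xa| := by rw [hΔdef]; field_simp
      nlinarith
    calc d*Δ ≤ (yb-ya)*Q - |β*(Q-P)| := e3
      _ ≤ (yb-ya)*Q + β*(Q-P) := by linarith [neg_abs_le (β*(Q-P))]
      _ ≤ |(yb-ya)*Q + β*(Q-P)| := le_abs_self _
      _ = |α*Q - β*P| := by rw [← e1]
  set ra := rr A P ya z with hra_def
  set rb := rr A Q yb z with hrb_def
  clear_value ra rb
  have key : NN A P Q ya yb z * (α*rb + β*ra) = (α*Q - β*P)*(α*Q + β*P) := by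
    have e1 : ra^2 = P^2 + A*(ya-z)^2 := by rw [hra_def]; exact rr_sq hA0.le P ya z
    have e2 : rb^2 = Q^2 + A*(yb-z)^2 := by rw [hrb_def]; exact rr_sq hA0.le Q yb z
    rw [NN, ← hra_def, ← hrb_def, hα, hβ]
    linear_combination (z-ya)^2*e2 - (z-yb)^2*e1
  set nn : ℝ := NN A P Q ya yb z with hnn
  clear_value nn
  have eN : nn = α*rb - β*ra := by rw [hnn, NN, ← hra_def, ← hrb_def, hα, hβ]
  have hΔle : Δ ≤ yb - ya := by rw [hΔdef]; linarith
  clear hnn hra_def hrb_def hs hΔdef hα hβ hQP hlt hxx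
  rcases lt_or_ge 0 β with hb | hb
  · -- both positive
    have ha : 0 < α := by linarith
    have hD2 : 0 < α*rb + β*ra := by
      have := mul_pos ha hrbpos; have := mul_pos hb hrapos; linarith
    have hS : 0 < α*Q + β*P := by
      have hQ0 : (0:ℝ) < Q := by linarith
      have hP0 : (0:ℝ) < P := by linarith
      have := mul_pos ha hQ0; have := mul_pos hb hP0; linarith
    have hD2le : α*rb + β*ra ≤ 3/2*(α*Q + β*P) := by
      have u1 := mul_le_mul_of_nonneg_left hrb' ha.le
      have u2 := mul_le_mul_of_nonneg_left hra' hb.le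
      linarith
    have habs : |nn| * (α*rb + β*ra) = |α*Q - β*P| * (α*Q + β*P) := by
      rw [← abs_of_pos hD2, ← abs_mul, key, abs_mul, abs_of_pos hS]
    have u3 := mul_le_mul_of_nonneg_left hD2le (abs_nonneg nn)
    have u4 := mul_le_mul_of_nonneg_right hT hS.le
    have h9 : (d*Δ)*(α*Q+β*P) ≤ (3/2*|nn|)*(α*Q+β*P) := by linarith
    have h10 := le_of_mul_le_mul_right h9 hS
    linarith
  · rcases le_or_gt 0 α with ha | ha
    · -- mixed signs
      have hN : d*Δ ≤ nn := by
        have u1 := mul_le_mul_of_nonneg_left hrb ha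
        have u2 : (-β)*d ≤ (-β)*ra := mul_le_mul_of_nonneg_left hra (by linarith)
        have u3 : d*Δ ≤ d*(yb-ya) := mul_le_mul_of_nonneg_left hΔle hd0.le
        have u5 : (α-β)*d = (yb-ya)*d := by rw [hαβ]
        linarith [u1, u2, u3, eN, u5]
      calc d*Δ/2 ≤ d*Δ := by linarith
        _ ≤ nn := hN
        _ ≤ |nn| := le_abs_self _
    · -- both negative
      have hb' : β < 0 := by linarith
      have ha' : 0 < -α := by linarith
      have hb'' : 0 < -β := by linarith
      have hD2 : 0 < -(α*rb + β*ra) := by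
        have := mul_pos ha' hrbpos; have := mul_pos hb'' hrapos; linarith
      have hS : 0 < -(α*Q + β*P) := by
        have hQ0 : (0:ℝ) < Q := by linarith
        have hP0 : (0:ℝ) < P := by linarith
        have := mul_pos ha' hQ0; have := mul_pos hb'' hP0; linarith
      have hD2le : -(α*rb + β*ra) ≤ 3/2*(-(α*Q + β*P)) := by
        have u1 := mul_le_mul_of_nonneg_left hrb' ha'.le
        have u2 := mul_le_mul_of_nonneg_left hra' hb''.le
        linarith
      have habs : |nn| * (-(α*rb + β*ra)) = |α*Q - β*P| * (-(α*Q + β*P)) := by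
        have h1 : |nn * (α*rb+β*ra)| = |α*Q - β*P| * |α*Q+β*P| := by rw [key, abs_mul]
        rw [abs_mul, abs_of_neg (by linarith : α*rb+β*ra < 0),
          abs_of_neg (by linarith : α*Q+β*P < 0)] at h1
        exact h1
      have u3 := mul_le_mul_of_nonneg_left hD2le (abs_nonneg nn)
      have u4 := mul_le_mul_of_nonneg_right hT hS.le
      have h9 : (d*Δ)*(-(α*Q+β*P)) ≤ (3/2*|nn|)*(-(α*Q+β*P)) := by linarith
      have h10 := le_of_mul_le_mul_right h9 hS
      linarith

lemma I_mul_aux (x y w : ℝ) (h : x * y = w) :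
    Complex.I * (x:ℂ) * (-Complex.I * (y:ℂ)) = ((w:ℝ):ℂ) := by
  have h2 : Complex.I * (x:ℂ) * (-Complex.I * (y:ℂ))
      = -(Complex.I*Complex.I)*((x:ℂ)*(y:ℂ)) := by ring
  rw [h2, Complex.I_mul_I, ← h]; push_cast; ring

set_option maxHeartbeats 2000000 in
lemma inner_bound {A d s xa xb ya yb P Q : ℝ}
    (hA : 1 ≤ A) (hs : s = Real.sqrt A) (hsd : s ≤ d) (h1s : 1 ≤ s)
    (hPl : d ≤ P) (hQl : d ≤ Q) (hPu : P ≤ 3*d) (hQu : Q ≤ 3*d)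
    (hQP : Q - P = s * (xb - xa))
    (hya : ya ∈ Set.Icc (0:ℝ) 1) (hyb : yb ∈ Set.Icc (0:ℝ) 1)
    (hlt : s / d * |xb - xa| < yb - ya) :
    ‖(∫ z in (0:ℝ)..1,
        Complex.exp (Complex.I * ((2*π*(rr A P ya z - rr A Q yb z) : ℝ) : ℂ)) *
          (((d^2/(rr A P ya z * rr A Q yb z)) : ℝ) : ℂ))‖
      ≤ 2 * (d/A) / ((yb - ya) - s/d*|xb-xa|) := by
  have hd0 : (0:ℝ) < d := lt_of_lt_of_le one_pos (le_trans h1s hsd)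
  have hA0 : (0:ℝ) < A := lt_of_lt_of_le one_pos hA
  have hπ := Real.pi_pos
  have hP0 : (0:ℝ) < P := lt_of_lt_of_le hd0 hPl
  have hQ0 : (0:ℝ) < Q := lt_of_lt_of_le hd0 hQl
  have hΔ : 0 < (yb - ya) - s/d*|xb-xa| := by linarith [hlt]
  set Δ : ℝ := (yb - ya) - s/d*|xb-xa| with hΔdef
  have hΔy : 0 < yb - ya := by
    have : 0 ≤ s/d*|xb-xa| := by positivity
    linarith
  set c : ℝ := d^2/(2*π*A) with hcdef
  have hc : 0 < c := by rw [hcdef]; positivity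
  have hNlow : ∀ z ∈ Set.Icc (0:ℝ) 1, d*Δ/2 ≤ |NN A P Q ya yb z| := fun z hz =>
    NN_lower hA hs hsd h1s hPl hQl hPu hQu hQP hya hyb hlt hz
  have hdΔ : 0 < d*Δ := mul_pos hd0 hΔ
  clear_value Δ c
  have hNne : ∀ z ∈ Set.Icc (0:ℝ) 1, NN A P Q ya yb z ≠ 0 := by
    intro z hz
    have := hNlow z hz
    intro h0; rw [h0] at this; simp at this; linarith
  have hIcc : Set.uIcc (0:ℝ) 1 = Set.Icc (0:ℝ) 1 := Set.uIcc_of_le zero_le_one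
  -- abbreviations
  set g : ℝ → ℝ := fun z => 2*π*(rr A P ya z - rr A Q yb z) with hgdef
  set F : ℝ → ℂ := fun z => Complex.exp (Complex.I * ((g z : ℝ) : ℂ)) *
      (((d^2/(rr A P ya z * rr A Q yb z)) : ℝ) : ℂ) with hFdef
  set E : ℝ → ℂ := fun z => Complex.exp (Complex.I * ((g z : ℝ) : ℂ)) *
      (Complex.I * ((c * NN' A P Q ya yb z / (NN A P Q ya yb z)^2 : ℝ) : ℂ)) with hEdef
  set Φ : ℝ → ℂ := fun z => Complex.exp (Complex.I * ((g z : ℝ) : ℂ)) *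
      (-Complex.I * ((c / NN A P Q ya yb z : ℝ) : ℂ)) with hΦdef
  -- derivative of Φ
  have hderiv : ∀ z ∈ Set.uIcc (0:ℝ) 1, HasDerivAt Φ (F z + E z) z := by
    intro z hz
    rw [hIcc] at hz
    have hN := hNne z hz
    have hra := rr_pos hA0.le hP0 ya z
    have hrb := rr_pos hA0.le hQ0 yb z
    have hgD : HasDerivAt g (2*π*(A*(z-ya)/rr A P ya z - A*(z-yb)/rr A Q yb z)) z :=
      ((rr_deriv hA0.le hP0 ya z).sub (rr_deriv hA0.le hQ0 yb z)).const_mul (2*π)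
    have hexpD : HasDerivAt (fun t => Complex.exp (Complex.I * ((g t : ℝ) : ℂ)))
        (Complex.exp (Complex.I * ((g z : ℝ) : ℂ)) *
          (Complex.I * ((2*π*(A*(z-ya)/rr A P ya z - A*(z-yb)/rr A Q yb z) : ℝ) : ℂ))) z :=
      (hgD.ofReal_comp.const_mul Complex.I).cexp
    have huD0 : HasDerivAt (fun t => c / NN A P Q ya yb t)
        ((0 * NN A P Q ya yb z - c * NN' A P Q ya yb z) / (NN A P Q ya yb z)^2) z :=
      (hasDerivAt_const z c).div (NN_deriv hA0.le hP0 hQ0 ya yb z) hN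
    have huD : HasDerivAt (fun t => -Complex.I * ((c / NN A P Q ya yb t : ℝ) : ℂ))
        (-Complex.I * (((0 * NN A P Q ya yb z - c * NN' A P Q ya yb z) /
            (NN A P Q ya yb z)^2 : ℝ) : ℂ)) z :=
      huD0.ofReal_comp.const_mul (-Complex.I)
    have hmul := hexpD.mul huD
    have heq : Complex.exp (Complex.I * ((g z : ℝ) : ℂ)) *
          (Complex.I * ((2*π*(A*(z-ya)/rr A P ya z - A*(z-yb)/rr A Q yb z) : ℝ) : ℂ)) *
          (-Complex.I * ((c / NN A P Q ya yb z : ℝ) : ℂ)) +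
        Complex.exp (Complex.I * ((g z : ℝ) : ℂ)) *
          (-Complex.I * (((0 * NN A P Q ya yb z - c * NN' A P Q ya yb z) /
            (NN A P Q ya yb z)^2 : ℝ) : ℂ)) = F z + E z := by
      rw [hFdef, hEdef]
      have keyr : (2*π*(A*(z-ya)/rr A P ya z - A*(z-yb)/rr A Q yb z)) *
          (c / NN A P Q ya yb z) = d^2/(rr A P ya z * rr A Q yb z) := by
        rw [hcdef, NN]
        have hNe : (z-ya)*rr A Q yb z - (z-yb)*rr A P ya z ≠ 0 := by rw [← NN]; exact hN
        rw [div_sub_div _ _ hra.ne' hrb.ne', show A * (z - ya) * rr A Q yb z - rr A P ya z * (A * (z - yb))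
          = A * ((z-ya)*rr A Q yb z - (z-yb)*rr A P ya z) by ring]
        field_simp
      have e2 : (Complex.I * ((2*π*(A*(z-ya)/rr A P ya z - A*(z-yb)/rr A Q yb z) : ℝ) : ℂ)) *
          (-Complex.I * ((c / NN A P Q ya yb z : ℝ) : ℂ))
          = (((d^2/(rr A P ya z * rr A Q yb z)) : ℝ) : ℂ) :=
        I_mul_aux _ _ _ keyr
      have e3 : (-Complex.I * (((0 * NN A P Q ya yb z - c * NN' A P Q ya yb z) /
            (NN A P Q ya yb z)^2 : ℝ) : ℂ))
          = Complex.I * ((c * NN' A P Q ya yb z / (NN A P Q ya yb z)^2 : ℝ) : ℂ) := by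
        push_cast
        ring
      rw [mul_assoc, e2, e3]
    exact heq ▸ hmul
  -- continuity and integrability
  have hgC : Continuous g := by
    rw [hgdef]; exact continuous_const.mul ((rr_cont A P ya).sub (rr_cont A Q yb))
  have hexpC : Continuous fun z => Complex.exp (Complex.I * ((g z : ℝ) : ℂ)) :=
    Complex.continuous_exp.comp (continuous_const.mul (Complex.continuous_ofReal.comp hgC))
  have hraC := rr_cont A P ya
  have hrbC := rr_cont A Q yb
  have hFC : Continuous F := by
    rw [hFdef]
    refine hexpC.mul (Complex.continuous_ofReal.comp ?_)
    exact continuous_const.div (hraC.mul hrbC) fun z =>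
      (mul_pos (rr_pos hA0.le hP0 ya z) (rr_pos hA0.le hQ0 yb z)).ne'
  have hECO : ContinuousOn E (Set.Icc (0:ℝ) 1) := by
    rw [hEdef]
    refine (hexpC.continuousOn).mul (continuousOn_const.mul
      (Complex.continuous_ofReal.comp_continuousOn ?_))
    refine ((continuous_const.mul (NN'_cont hA0.le hP0 hQ0 ya yb)).continuousOn).div
      (((NN_cont A P Q ya yb).pow 2).continuousOn) ?_
    exact fun z hz => pow_ne_zero 2 (hNne z hz)
  have hFint : IntervalIntegrable F MeasureTheory.volume 0 1 :=
    hFC.intervalIntegrable 0 1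
  have hEint : IntervalIntegrable E MeasureTheory.volume 0 1 := by
    apply ContinuousOn.intervalIntegrable; rw [hIcc]; exact hECO
  -- FTC
  have hftc : ∫ z in (0:ℝ)..1, (F z + E z) = Φ 1 - Φ 0 :=
    intervalIntegral.integral_eq_sub_of_hasDerivAt hderiv (hFint.add hEint)
  have hsplitFE : ∫ z in (0:ℝ)..1, F z = Φ 1 - Φ 0 - ∫ z in (0:ℝ)..1, E z := by
    rw [← hftc, intervalIntegral.integral_add hFint hEint]; ring
  -- bound on Φ
  have hΦbound : ∀ z ∈ Set.Icc (0:ℝ) 1, ‖Φ z‖ ≤ 2*c/(d*Δ) := by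
    intro z hz
    rw [hΦdef]
    rw [norm_mul, norm_mul]
    rw [mul_comm Complex.I ((g z : ℝ) : ℂ), Complex.norm_exp_ofReal_mul_I]
    rw [norm_neg, Complex.norm_I, Complex.norm_real, Real.norm_eq_abs]
    rw [abs_div, abs_of_pos hc]
    have h1 := hNlow z hz
    have h2 : 0 < |NN A P Q ya yb z| := by linarith
    calc 1 * (1 * (c / |NN A P Q ya yb z|)) = c / |NN A P Q ya yb z| := by ring
      _ ≤ c / (d*Δ/2) := div_le_div_of_nonneg_left hc.le (by linarith) h1
      _ = 2*c/(d*Δ) := by field_simp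
  -- splitting point
  set zr : ℝ := (Q^2 - P^2)/(2*A*(yb-ya)) + (ya+yb)/2 with hzrdef
  set z₀ : ℝ := min 1 (max 0 zr) with hz₀def
  have hz₀0 : 0 ≤ z₀ := le_min zero_le_one (le_max_left 0 zr)
  have hz₀1 : z₀ ≤ 1 := min_le_left _ _
  have hz₀mem : z₀ ∈ Set.Icc (0:ℝ) 1 := ⟨hz₀0, hz₀1⟩
  -- sign of NN'
  have hLkey : ∀ z : ℝ, (rr A Q yb z)^2 - (rr A P ya z)^2 = 2*A*(yb-ya)*(zr - z) := by
    intro z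
    rw [rr_sq hA0.le, rr_sq hA0.le, hzrdef]
    field_simp
    ring
  have hN'nonneg : ∀ z : ℝ, z ≤ zr → 0 ≤ NN' A P Q ya yb z := by
    intro z hzzr
    rw [NN'_factor hA0.le hP0 hQ0]
    apply div_nonneg _ (mul_pos (rr_pos hA0.le hP0 ya z) (rr_pos hA0.le hQ0 yb z)).le
    apply mul_nonneg _ (NN'_M hA0.le hP0 hQ0 ya yb z)
    have h1 : (rr A P ya z)^2 ≤ (rr A Q yb z)^2 := by
      have := hLkey z
      nlinarith [mul_nonneg (mul_nonneg (by linarith : (0:ℝ) ≤ 2*A) hΔy.le)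
        (by linarith : (0:ℝ) ≤ zr - z)]
    have h2 : rr A P ya z ≤ rr A Q yb z := by
      rw [← Real.sqrt_sq (rr_pos hA0.le hP0 ya z).le, ← Real.sqrt_sq (rr_pos hA0.le hQ0 yb z).le]
      exact Real.sqrt_le_sqrt h1
    linarith
  have hN'nonpos : ∀ z : ℝ, zr ≤ z → NN' A P Q ya yb z ≤ 0 := by
    intro z hzzr
    rw [NN'_factor hA0.le hP0 hQ0]
    apply div_nonpos_of_nonpos_of_nonneg _
      (mul_pos (rr_pos hA0.le hP0 ya z) (rr_pos hA0.le hQ0 yb z)).le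
    apply mul_nonpos_of_nonpos_of_nonneg _ (NN'_M hA0.le hP0 hQ0 ya yb z)
    have h1 : (rr A Q yb z)^2 ≤ (rr A P ya z)^2 := by
      have := hLkey z
      nlinarith [mul_nonneg (mul_nonneg (by linarith : (0:ℝ) ≤ 2*A) hΔy.le)
        (by linarith : (0:ℝ) ≤ z - zr)]
    have h2 : rr A Q yb z ≤ rr A P ya z := by
      rw [← Real.sqrt_sq (rr_pos hA0.le hP0 ya z).le, ← Real.sqrt_sq (rr_pos hA0.le hQ0 yb z).le]
      exact Real.sqrt_le_sqrt h1
    linarith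
  -- derivative of -(c/N)
  have hVderiv : ∀ t ∈ Set.Icc (0:ℝ) 1,
      HasDerivAt (fun t => -(c / NN A P Q ya yb t))
        (c * NN' A P Q ya yb t / (NN A P Q ya yb t)^2) t := by
    intro t ht
    have h0 := ((hasDerivAt_const t c).div (NN_deriv hA0.le hP0 hQ0 ya yb t) (hNne t ht)).neg
    refine h0.congr_deriv ?_
    ring
  have hV2deriv : ∀ t ∈ Set.Icc (0:ℝ) 1,
      HasDerivAt (fun t => c / NN A P Q ya yb t)
        (-(c * NN' A P Q ya yb t / (NN A P Q ya yb t)^2)) t := by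
    intro t ht
    have h0 := (hasDerivAt_const t c).div (NN_deriv hA0.le hP0 hQ0 ya yb t) (hNne t ht)
    refine h0.congr_deriv ?_
    ring
  have hW'CO : ContinuousOn (fun t => c * NN' A P Q ya yb t / (NN A P Q ya yb t)^2)
      (Set.Icc (0:ℝ) 1) := by
    refine ((continuous_const.mul (NN'_cont hA0.le hP0 hQ0 ya yb)).continuousOn).div
      (((NN_cont A P Q ya yb).pow 2).continuousOn) ?_
    exact fun z hz => pow_ne_zero 2 (hNne z hz)
  have habs_cN : ∀ z ∈ Set.Icc (0:ℝ) 1, |c / NN A P Q ya yb z| ≤ 2*c/(d*Δ) := by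
    intro z hz
    rw [abs_div, abs_of_pos hc]
    have h1 := hNlow z hz
    calc c / |NN A P Q ya yb z| ≤ c / (d*Δ/2) :=
          div_le_div_of_nonneg_left hc.le (by linarith) h1
      _ = 2*c/(d*Δ) := by field_simp
  have hnormE : ∀ z : ℝ, ‖E z‖ = |c * NN' A P Q ya yb z / (NN A P Q ya yb z)^2| := by
    intro z
    rw [hEdef]
    rw [norm_mul, norm_mul,
      mul_comm Complex.I ((g z : ℝ) : ℂ), Complex.norm_exp_ofReal_mul_I, Complex.norm_I,
      Complex.norm_real, Real.norm_eq_abs]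
    ring
  -- first piece
  have hsub1 : Set.uIcc (0:ℝ) z₀ ⊆ Set.Icc (0:ℝ) 1 := by
    rw [Set.uIcc_of_le hz₀0]
    exact Set.Icc_subset_Icc le_rfl hz₀1
  have hsub2 : Set.uIcc z₀ (1:ℝ) ⊆ Set.Icc (0:ℝ) 1 := by
    rw [Set.uIcc_of_le hz₀1]
    exact Set.Icc_subset_Icc hz₀0 le_rfl
  have hEint1 : IntervalIntegrable E MeasureTheory.volume 0 z₀ :=
    (hECO.mono hsub1).intervalIntegrable
  have hEint2 : IntervalIntegrable E MeasureTheory.volume z₀ 1 :=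
    (hECO.mono hsub2).intervalIntegrable
  have hB1 : ‖∫ z in (0:ℝ)..z₀, E z‖ ≤ 4*c/(d*Δ) := by
    rcases eq_or_lt_of_le hz₀0 with h0 | h0
    · rw [← h0]
      simp
      positivity
    · have hz₀zr : z₀ ≤ zr := by
        rcases le_or_gt zr 0 with h1 | h1
        · exfalso
          have : z₀ ≤ 0 := by
            rw [hz₀def]
            calc min 1 (max 0 zr) ≤ max 0 zr := min_le_right _ _
              _ = 0 := max_eq_left h1
          linarith
        · calc z₀ ≤ max 0 zr := min_le_right _ _
            _ = zr := max_eq_right h1.le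
      have hEq : Set.EqOn (fun z => ‖E z‖)
          (fun t => c * NN' A P Q ya yb t / (NN A P Q ya yb t)^2) (Set.uIcc (0:ℝ) z₀) := by
        intro t ht
        have ht' := hsub1 ht
        rw [Set.uIcc_of_le hz₀0] at ht
        have hN' : 0 ≤ NN' A P Q ya yb t := hN'nonneg t (le_trans ht.2 hz₀zr)
        simp only
        rw [hnormE t, abs_of_nonneg (div_nonneg (mul_nonneg hc.le hN') (sq_nonneg _))]
      have hFTC1 : ∫ z in (0:ℝ)..z₀, c * NN' A P Q ya yb z / (NN A P Q ya yb z)^2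
          = -(c / NN A P Q ya yb z₀) - -(c / NN A P Q ya yb 0) :=
        intervalIntegral.integral_eq_sub_of_hasDerivAt
          (fun t ht => hVderiv t (hsub1 ht)) ((hW'CO.mono hsub1).intervalIntegrable)
      calc ‖∫ z in (0:ℝ)..z₀, E z‖
          = ‖∫ z in (0:ℝ)..z₀, E z‖ := rfl
        _ ≤ |∫ z in (0:ℝ)..z₀, ‖E z‖| := intervalIntegral.norm_integral_le_abs_integral_norm
        _ = |∫ z in (0:ℝ)..z₀, c * NN' A P Q ya yb z / (NN A P Q ya yb z)^2| := by
            rw [intervalIntegral.integral_congr hEq]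
        _ = |(-(c / NN A P Q ya yb z₀)) - (-(c / NN A P Q ya yb 0))| := by rw [hFTC1]
        _ ≤ |c / NN A P Q ya yb z₀| + |c / NN A P Q ya yb 0| := by
            rw [abs_sub_comm]
            calc |(-(c / NN A P Q ya yb 0)) - (-(c / NN A P Q ya yb z₀))|
                = |(c / NN A P Q ya yb z₀) - (c / NN A P Q ya yb 0)| := by
                  rw [show (-(c / NN A P Q ya yb 0)) - (-(c / NN A P Q ya yb z₀))
                    = (c / NN A P Q ya yb z₀) - (c / NN A P Q ya yb 0) by ring]
              _ ≤ _ := abs_sub _ _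
        _ ≤ 2*c/(d*Δ) + 2*c/(d*Δ) :=
            add_le_add (habs_cN z₀ hz₀mem) (habs_cN 0 (by constructor <;> norm_num))
        _ = 4*c/(d*Δ) := by ring
  have hB2 : ‖∫ z in z₀..(1:ℝ), E z‖ ≤ 4*c/(d*Δ) := by
    rcases eq_or_lt_of_le hz₀1 with h0 | h0
    · rw [h0]
      simp
      positivity
    · have hz₀zr : zr ≤ z₀ := by
        rcases le_or_gt 1 zr with h1 | h1
        · exfalso
          have : 1 ≤ z₀ := by
            rw [hz₀def]
            exact le_min le_rfl (le_trans h1 (le_max_right 0 zr))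
          linarith
        · rcases le_or_gt zr 0 with h2 | h2
          · exact le_trans h2 hz₀0
          · rw [hz₀def, max_eq_right h2.le]
            exact le_min h1.le le_rfl
      have hEq : Set.EqOn (fun z => ‖E z‖)
          (fun t => -(c * NN' A P Q ya yb t / (NN A P Q ya yb t)^2)) (Set.uIcc z₀ (1:ℝ)) := by
        intro t ht
        rw [Set.uIcc_of_le hz₀1] at ht
        have hN' : NN' A P Q ya yb t ≤ 0 := hN'nonpos t (le_trans hz₀zr ht.1)
        simp only
        rw [hnormE t, abs_of_nonpos (div_nonpos_of_nonpos_of_nonneg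
          (mul_nonpos_of_nonneg_of_nonpos hc.le hN') (sq_nonneg _))]
      have hFTC2 : ∫ z in z₀..(1:ℝ), -(c * NN' A P Q ya yb z / (NN A P Q ya yb z)^2)
          = (c / NN A P Q ya yb 1) - (c / NN A P Q ya yb z₀) :=
        intervalIntegral.integral_eq_sub_of_hasDerivAt
          (fun t ht => hV2deriv t (hsub2 ht)) (((hW'CO.mono hsub2).neg).intervalIntegrable)
      calc ‖∫ z in z₀..(1:ℝ), E z‖
          = ‖∫ z in z₀..(1:ℝ), E z‖ := rfl
        _ ≤ |∫ z in z₀..(1:ℝ), ‖E z‖| := intervalIntegral.norm_integral_le_abs_integral_norm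
        _ = |∫ z in z₀..(1:ℝ), -(c * NN' A P Q ya yb z / (NN A P Q ya yb z)^2)| := by
            rw [intervalIntegral.integral_congr hEq]
        _ = |(c / NN A P Q ya yb 1) - (c / NN A P Q ya yb z₀)| := by rw [hFTC2]
        _ ≤ |c / NN A P Q ya yb 1| + |c / NN A P Q ya yb z₀| := abs_sub _ _
        _ ≤ 2*c/(d*Δ) + 2*c/(d*Δ) :=
            add_le_add (habs_cN 1 (by constructor <;> norm_num)) (habs_cN z₀ hz₀mem)
        _ = 4*c/(d*Δ) := by ring
  have hEbound : ‖∫ z in (0:ℝ)..1, E z‖ ≤ 8*c/(d*Δ) := by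
    rw [← intervalIntegral.integral_add_adjacent_intervals hEint1 hEint2]
    calc ‖(∫ z in (0:ℝ)..z₀, E z) + ∫ z in z₀..(1:ℝ), E z‖
        ≤ ‖∫ z in (0:ℝ)..z₀, E z‖ + ‖∫ z in z₀..(1:ℝ), E z‖ :=
          norm_add_le _ _
      _ ≤ 4*c/(d*Δ) + 4*c/(d*Δ) := add_le_add hB1 hB2
      _ = 8*c/(d*Δ) := by ring
  -- final assembly
  clear_value g F E Φ zr z₀
  have hmain : ‖∫ z in (0:ℝ)..1, F z‖ ≤ 12*c/(d*Δ) := by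
    rw [hsplitFE]
    have t1 : ‖Φ 1 - Φ 0 - ∫ z in (0:ℝ)..1, E z‖
        ≤ ‖Φ 1‖ + ‖Φ 0‖ + ‖∫ z in (0:ℝ)..1, E z‖ := by
      calc ‖Φ 1 - Φ 0 - ∫ z in (0:ℝ)..1, E z‖
          ≤ ‖Φ 1 - Φ 0‖ + ‖∫ z in (0:ℝ)..1, E z‖ := norm_sub_le _ _
        _ ≤ ‖Φ 1‖ + ‖Φ 0‖ + ‖∫ z in (0:ℝ)..1, E z‖ :=
            add_le_add_left (norm_sub_le _ _) _
    have b1 := hΦbound 1 (by constructor <;> norm_num)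
    have b0 := hΦbound 0 (by constructor <;> norm_num)
    calc ‖Φ 1 - Φ 0 - ∫ z in (0:ℝ)..1, E z‖
        ≤ ‖Φ 1‖ + ‖Φ 0‖ + ‖∫ z in (0:ℝ)..1, E z‖ := t1
      _ ≤ 2*c/(d*Δ) + 2*c/(d*Δ) + 8*c/(d*Δ) := add_le_add (add_le_add b1 b0) hEbound
      _ = 12*c/(d*Δ) := by ring
  refine le_trans hmain ?_
  have hπ3 := Real.pi_gt_three
  have hcle : c ≤ d^2/(6*A) := by
    rw [hcdef]
    apply div_le_div_of_nonneg_left (by positivity) (by positivity)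
    nlinarith
  calc 12*c/(d*Δ) ≤ 12*(d^2/(6*A))/(d*Δ) := by
        apply div_le_div_of_nonneg_right ?_ hdΔ.le
        linarith
    _ = 2*(d/A)/Δ := by field_simp; ring

lemma conj_II (f : ℝ → ℂ) (a b : ℝ) :
    ∫ x in a..b, (starRingEnd ℂ) (f x) = (starRingEnd ℂ) (∫ x in a..b, f x) := by
  rw [intervalIntegral, intervalIntegral, integral_conj,
    integral_conj, ← map_sub]

lemma main_pos (Ac d xa xb ya yb : ℝ) (hAc : 1 ≤ Ac) (hd1 : Real.sqrt Ac ≤ d) (hd2 : d ≤ Ac)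
    (hxa : xa ∈ Set.Icc (0:ℝ) 1) (hxb : xb ∈ Set.Icc (0:ℝ) 1)
    (hya : ya ∈ Set.Icc (0:ℝ) 1) (hyb : yb ∈ Set.Icc (0:ℝ) 1)
    (hlt : Real.sqrt Ac / d * |xb - xa| < yb - ya) :
    ‖(∫ w in (0:ℝ)..1, ∫ z in (0:ℝ)..1,
        Complex.exp (Complex.I * ((2 * π * gab Ac d xa xb ya yb w z : ℝ) : ℂ)) /
          ((Gab Ac d xa xb ya yb w z : ℝ) : ℂ))‖
      ≤ 2 * (d / Ac) / ((yb - ya) - Real.sqrt Ac / d * |xb - xa|) := by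
  have h1s : (1:ℝ) ≤ Real.sqrt Ac := by
    have := Real.sqrt_le_sqrt hAc
    rwa [Real.sqrt_one] at this
  have hd0 : (0:ℝ) < d := lt_of_lt_of_le one_pos (le_trans h1s hd1)
  have hs0 : (0:ℝ) ≤ Real.sqrt Ac := Real.sqrt_nonneg Ac
  have hbound : ∀ w ∈ Set.uIoc (0:ℝ) 1,
      ‖∫ z in (0:ℝ)..1, Complex.exp (Complex.I * ((2 * π * gab Ac d xa xb ya yb w z : ℝ) : ℂ)) /
          ((Gab Ac d xa xb ya yb w z : ℝ) : ℂ)‖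
        ≤ 2 * (d / Ac) / ((yb - ya) - Real.sqrt Ac / d * |xb - xa|) := by
    intro w hw
    rw [Set.uIoc_of_le zero_le_one] at hw
    have hw' : w ∈ Set.Icc (0:ℝ) 1 := ⟨hw.1.le, hw.2⟩
    set P : ℝ := d + Real.sqrt Ac * (xa + w) with hPdef
    set Q : ℝ := d + Real.sqrt Ac * (xb + w) with hQdef
    have hPl : d ≤ P := by
      rw [hPdef]; nlinarith [mul_nonneg hs0 (by linarith [hxa.1, hw'.1] : (0:ℝ) ≤ xa + w)]
    have hQl : d ≤ Q := by
      rw [hQdef]; nlinarith [mul_nonneg hs0 (by linarith [hxb.1, hw'.1] : (0:ℝ) ≤ xb + w)]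
    have hPu : P ≤ 3*d := by
      rw [hPdef]
      have : Real.sqrt Ac * (xa + w) ≤ Real.sqrt Ac * 2 :=
        mul_le_mul_of_nonneg_left (by linarith [hxa.2, hw'.2]) hs0
      linarith
    have hQu : Q ≤ 3*d := by
      rw [hQdef]
      have : Real.sqrt Ac * (xb + w) ≤ Real.sqrt Ac * 2 :=
        mul_le_mul_of_nonneg_left (by linarith [hxb.2, hw'.2]) hs0
      linarith
    have hQP : Q - P = Real.sqrt Ac * (xb - xa) := by rw [hPdef, hQdef]; ring
    have key := inner_bound hAc rfl hd1 h1s hPl hQl hPu hQu hQP hya hyb hlt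
    have heq : (∫ z in (0:ℝ)..1,
        Complex.exp (Complex.I * ((2 * π * gab Ac d xa xb ya yb w z : ℝ) : ℂ)) /
          ((Gab Ac d xa xb ya yb w z : ℝ) : ℂ))
        = ∫ z in (0:ℝ)..1,
        Complex.exp (Complex.I * ((2*π*(rr Ac P ya z - rr Ac Q yb z) : ℝ) : ℂ)) *
          (((d^2/(rr Ac P ya z * rr Ac Q yb z)) : ℝ) : ℂ) := by
      apply intervalIntegral.integral_congr
      intro z _
      have hgab : gab Ac d xa xb ya yb w z = rr Ac P ya z - rr Ac Q yb z := by
        rw [gab, rr, rr, hPdef, hQdef]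
      have hGab : (Gab Ac d xa xb ya yb w z : ℝ) = (rr Ac P ya z * rr Ac Q yb z)/d^2 := by
        rw [Gab, rr, rr, hPdef, hQdef]
        field_simp
      simp only
      rw [hgab, hGab, div_eq_mul_inv, ← Complex.ofReal_inv, inv_div]
    rw [heq] at *
    exact key
  have := intervalIntegral.norm_integral_le_of_norm_le_const hbound
  simpa using this

theorem stmt_17 :
    ∃ K₈ : ℝ, 0 < K₈ ∧
      ∀ Ac d : ℝ, 1 ≤ Ac → Real.sqrt Ac ≤ d → d ≤ Ac →
      ∀ xa ∈ Set.Icc (0:ℝ) 1, ∀ xb ∈ Set.Icc (0:ℝ) 1,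
      ∀ ya ∈ Set.Icc (0:ℝ) 1, ∀ yb ∈ Set.Icc (0:ℝ) 1,
      Real.sqrt Ac / d * |xb - xa| < |yb - ya| →
        ‖(∫ w in (0:ℝ)..1, ∫ z in (0:ℝ)..1,
            Complex.exp (Complex.I * ((2 * π * gab Ac d xa xb ya yb w z : ℝ) : ℂ)) /
              ((Gab Ac d xa xb ya yb w z : ℝ) : ℂ))‖
          ≤ K₈ * (d / Ac) / (|yb - ya| - Real.sqrt Ac / d * |xb - xa|) := by
  refine ⟨2, by norm_num, ?_⟩
  intro Ac d hAc hd1 hd2 xa hxa xb hxb ya hya yb hyb hlt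
  have hd0 : (0:ℝ) < d := by
    have h1s : (1:ℝ) ≤ Real.sqrt Ac := by
      have := Real.sqrt_le_sqrt hAc
      rwa [Real.sqrt_one] at this
    linarith [le_trans h1s hd1]
  rcases lt_trichotomy ya yb with hy | hy | hy
  · have habs : |yb - ya| = yb - ya := abs_of_pos (by linarith)
    rw [habs] at hlt ⊢
    exact main_pos Ac d xa xb ya yb hAc hd1 hd2 hxa hxb hya hyb hlt
  · exfalso
    rw [hy] at hlt
    simp at hlt
    have : (0:ℝ) ≤ Real.sqrt Ac / d * |xb - xa| := by positivity
    linarith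
  · have habs : |yb - ya| = ya - yb := by
      rw [abs_of_neg (by linarith : yb - ya < 0)]; ring
    have habsx : |xb - xa| = |xa - xb| := abs_sub_comm _ _
    rw [habs, habsx] at hlt ⊢
    have hmain := main_pos Ac d xb xa yb ya hAc hd1 hd2 hxb hxa hyb hya hlt
    have key : (∫ w in (0:ℝ)..1, ∫ z in (0:ℝ)..1,
          Complex.exp (Complex.I * ((2 * π * gab Ac d xa xb ya yb w z : ℝ) : ℂ)) /
            ((Gab Ac d xa xb ya yb w z : ℝ) : ℂ))
        = (starRingEnd ℂ) (∫ w in (0:ℝ)..1, ∫ z in (0:ℝ)..1,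
          Complex.exp (Complex.I * ((2 * π * gab Ac d xb xa yb ya w z : ℝ) : ℂ)) /
            ((Gab Ac d xb xa yb ya w z : ℝ) : ℂ)) := by
      rw [← conj_II]
      apply intervalIntegral.integral_congr
      intro w _
      simp only
      rw [← conj_II]
      apply intervalIntegral.integral_congr
      intro z _
      simp only
      have h1 : gab Ac d xb xa yb ya w z = -gab Ac d xa xb ya yb w z := by
        rw [gab, gab]; ring
      have h2 : Gab Ac d xb xa yb ya w z = Gab Ac d xa xb ya yb w z := by
        rw [Gab, Gab]; ring
      rw [h1, h2, map_div₀, ← Complex.exp_conj]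
      congr 1
      · congr 1
        rw [map_mul, Complex.conj_I, Complex.conj_ofReal]
        push_cast
        ring
      · exact (Complex.conj_ofReal _).symm
    rw [key, Complex.norm_conj]
    exact hmain
end

section
/- There exists a constant K > 0 such that for every c ≥ 0 and every ε with 0 < ε < 1, ∫_{U₁(ε)} ( |y_b − y_a| − c·|x_b − x_a| )^{−1} dx_a dx_b dy_a dy_b ≤ K · (1 + log(1/ε)), where U₁(ε) = { (x_a, x_b, y_a, y_b) ∈ [0,1]⁴ : |y_b − y_a| − c·|x_b − x_a| ≥ ε }. -/
open Real Set MeasureTheory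

/-- The domain `U₁(ε)`: quadruples `(x_a, x_b, y_a, y_b)` in the unit cube with
`|y_b − y_a| − c·|x_b − x_a| ≥ ε`. -/
def U1 (c ε : ℝ) : Set (ℝ × ℝ × ℝ × ℝ) :=
  {p | p.1 ∈ Set.Icc (0:ℝ) 1 ∧ p.2.1 ∈ Set.Icc (0:ℝ) 1 ∧ p.2.2.1 ∈ Set.Icc (0:ℝ) 1 ∧
       p.2.2.2 ∈ Set.Icc (0:ℝ) 1 ∧ ε ≤ |p.2.2.2 - p.2.2.1| - c * |p.2.1 - p.1|}

lemma lint_right (t ε : ℝ) (ht : 0 ≤ t) (hε : 0 < ε) :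
    ∫⁻ d in Icc (t + ε) 1, ENNReal.ofReal (d - t)⁻¹ ≤ ENNReal.ofReal (Real.log (1/ε)) := by
  by_cases h : t + ε ≤ 1
  · have hint : IntegrableOn (fun d => (d - t)⁻¹) (Icc (t + ε) 1) := by
      apply ContinuousOn.integrableOn_Icc
      apply ContinuousOn.inv₀
      · exact (continuous_id.sub continuous_const).continuousOn
      · intro x hx
        have h1 := hx.1; intro h0; nlinarith
    have hnn : 0 ≤ᵐ[volume.restrict (Icc (t+ε) 1)] fun d => (d - t)⁻¹ := by
      refine ae_restrict_of_forall_mem measurableSet_Icc fun x hx => ?_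
      have h1 := hx.1
      have : 0 < x - t := by linarith
      positivity
    rw [← ofReal_integral_eq_lintegral_ofReal hint hnn]
    apply ENNReal.ofReal_le_ofReal
    have hval : ∫ d in Icc (t+ε) 1, (d - t)⁻¹ = Real.log ((1 - t)/ε) := by
      rw [MeasureTheory.integral_Icc_eq_integral_Ioc,
        ← intervalIntegral.integral_of_le h]
      rw [intervalIntegral.integral_comp_sub_right (fun x => x⁻¹) t]
      rw [integral_inv_of_pos (by linarith) (by linarith)]
      ring_nf
    rw [hval]
    have h1t : 0 < 1 - t := by linarith
    apply Real.log_le_log (by positivity)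
    rw [div_le_div_iff₀ hε hε]
    nlinarith
  · rw [Icc_eq_empty h, Measure.restrict_empty, lintegral_zero_measure]
    exact zero_le

lemma lint_left (s ε : ℝ) (hs : s ≤ 1) (hε : 0 < ε) :
    ∫⁻ d in Icc 0 (s - ε), ENNReal.ofReal (s - d)⁻¹ ≤ ENNReal.ofReal (Real.log (1/ε)) := by
  by_cases h : 0 ≤ s - ε
  · have hint : IntegrableOn (fun d => (s - d)⁻¹) (Icc 0 (s - ε)) := by
      apply ContinuousOn.integrableOn_Icc
      apply ContinuousOn.inv₀
      · exact (continuous_const.sub continuous_id).continuousOn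
      · intro x hx
        have h1 := hx.2; intro h0; nlinarith
    have hnn : 0 ≤ᵐ[volume.restrict (Icc 0 (s-ε))] fun d => (s - d)⁻¹ := by
      refine ae_restrict_of_forall_mem measurableSet_Icc fun x hx => ?_
      have h1 := hx.2
      have : 0 < s - x := by linarith
      positivity
    rw [← ofReal_integral_eq_lintegral_ofReal hint hnn]
    apply ENNReal.ofReal_le_ofReal
    have hval : ∫ d in Icc 0 (s-ε), (s - d)⁻¹ = Real.log (s/ε) := by
      rw [MeasureTheory.integral_Icc_eq_integral_Ioc,
        ← intervalIntegral.integral_of_le h]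
      rw [intervalIntegral.integral_comp_sub_left (fun x => x⁻¹) s]
      norm_num
      rw [integral_inv_of_pos hε (by linarith : (0:ℝ) < s)]
    rw [hval]
    have hsp : 0 < s := by linarith
    apply Real.log_le_log (by positivity)
    rw [div_le_div_iff₀ hε hε]
    nlinarith
  · rw [Icc_eq_empty (by linarith), Measure.restrict_empty, lintegral_zero_measure]
    exact zero_le

lemma one_dim (u A ε : ℝ) (hu0 : 0 ≤ u) (hu1 : u ≤ 1) (hA : 0 ≤ A) (hε : 0 < ε) (hε1 : ε < 1) :
    ∫⁻ d, ({d : ℝ | d ∈ Icc (0:ℝ) 1 ∧ ε ≤ |d - u| - A}).indicator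
      (fun d => ENNReal.ofReal (|d - u| - A)⁻¹) d ≤ ENNReal.ofReal (2 * Real.log (1/ε)) := by
  set S : Set ℝ := {d : ℝ | d ∈ Icc (0:ℝ) 1 ∧ ε ≤ |d - u| - A} with hS
  set g : ℝ → ENNReal := fun d => ENNReal.ofReal (|d - u| - A)⁻¹ with hg
  set f1 : ℝ → ENNReal := (Icc (u+A+ε) 1).indicator (fun d => ENNReal.ofReal (d - (u+A))⁻¹) with hf1
  set f2 : ℝ → ENNReal := (Icc 0 (u-A-ε)).indicator (fun d => ENNReal.ofReal ((u-A) - d)⁻¹) with hf2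
  have hpt : ∀ d, S.indicator g d ≤ f1 d + f2 d := by
    intro d
    by_cases hd : d ∈ S
    · rw [Set.indicator_of_mem hd]
      obtain ⟨⟨hd0, hd1⟩, hdε⟩ := hd
      rcases le_or_gt u d with hud | hud
      · have habs : |d - u| = d - u := abs_of_nonneg (by linarith)
        have hmem : d ∈ Icc (u+A+ε) 1 := ⟨by rw [habs] at hdε; linarith, hd1⟩
        have heq : f1 d = g d := by
          rw [hf1, Set.indicator_of_mem hmem, hg]
          simp only [habs]
          ring_nf
        rw [← heq]
        exact le_self_add
      · have habs : |d - u| = u - d := by rw [abs_sub_comm]; exact abs_of_nonneg (by linarith)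
        have hmem : d ∈ Icc 0 (u-A-ε) := ⟨hd0, by rw [habs] at hdε; linarith⟩
        have heq : f2 d = g d := by
          rw [hf2, Set.indicator_of_mem hmem, hg]
          simp only [habs]
          ring_nf
        rw [← heq]
        exact le_add_self
    · rw [Set.indicator_of_notMem hd]
      exact zero_le
  have hf1m : Measurable f1 :=
    ((measurable_id.sub measurable_const).inv.ennreal_ofReal).indicator measurableSet_Icc
  calc ∫⁻ d, S.indicator g d ≤ ∫⁻ d, (f1 d + f2 d) := lintegral_mono hpt
    _ = (∫⁻ d, f1 d) + ∫⁻ d, f2 d := lintegral_add_left hf1m f2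
    _ ≤ ENNReal.ofReal (Real.log (1/ε)) + ENNReal.ofReal (Real.log (1/ε)) := by
        apply add_le_add
        · rw [hf1, lintegral_indicator measurableSet_Icc]
          exact lint_right (u+A) ε (by linarith) hε
        · rw [hf2, lintegral_indicator measurableSet_Icc]
          exact lint_left (u-A) ε (by linarith) hε
    _ = ENNReal.ofReal (2 * Real.log (1/ε)) := by
        rw [← ENNReal.ofReal_add (Real.log_nonneg (by rw [le_div_iff₀ hε]; linarith))
          (Real.log_nonneg (by rw [le_div_iff₀ hε]; linarith))]
        ring_nf

lemma inner_bound_s19 (c ε : ℝ) (hc : 0 ≤ c) (hε : 0 < ε) (hε1 : ε < 1) (a b u : ℝ) :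
    ∫⁻ d, (U1 c ε).indicator
        (fun p => ENNReal.ofReal (|p.2.2.2 - p.2.2.1| - c * |p.2.1 - p.1|)⁻¹) (a, b, u, d)
      ≤ (Icc (0:ℝ) 1).indicator (fun _ => (Icc (0:ℝ) 1).indicator
          (fun _ => (Icc (0:ℝ) 1).indicator
            (fun _ => ENNReal.ofReal (2 * Real.log (1/ε))) a) b) u := by
  by_cases ha : a ∈ Icc (0:ℝ) 1
  · by_cases hb : b ∈ Icc (0:ℝ) 1
    · by_cases hu : u ∈ Icc (0:ℝ) 1
      · rw [Set.indicator_of_mem hu, Set.indicator_of_mem hb, Set.indicator_of_mem ha]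
        have key : ∀ d : ℝ, (U1 c ε).indicator
            (fun p => ENNReal.ofReal (|p.2.2.2 - p.2.2.1| - c * |p.2.1 - p.1|)⁻¹) (a, b, u, d)
            = ({d : ℝ | d ∈ Icc (0:ℝ) 1 ∧ ε ≤ |d - u| - c * |b - a|}).indicator
              (fun d => ENNReal.ofReal (|d - u| - c * |b - a|)⁻¹) d := by
          intro d
          have hmem : (a, b, u, d) ∈ U1 c ε ↔ d ∈ {d : ℝ | d ∈ Icc (0:ℝ) 1 ∧ ε ≤ |d - u| - c * |b - a|} := by
            simp only [U1, Set.mem_setOf_eq, ha, hb, hu, true_and]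
          by_cases hd : d ∈ {d : ℝ | d ∈ Icc (0:ℝ) 1 ∧ ε ≤ |d - u| - c * |b - a|}
          · rw [Set.indicator_of_mem (hmem.mpr hd), Set.indicator_of_mem hd]
          · rw [Set.indicator_of_notMem (fun h => hd (hmem.mp h)), Set.indicator_of_notMem hd]
        rw [lintegral_congr key]
        exact one_dim u (c * |b - a|) ε hu.1 hu.2 (by positivity) hε hε1
      · rw [Set.indicator_of_notMem hu]
        have : ∀ d : ℝ, (U1 c ε).indicator
            (fun p => ENNReal.ofReal (|p.2.2.2 - p.2.2.1| - c * |p.2.1 - p.1|)⁻¹) (a, b, u, d) = 0 := by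
          intro d
          apply Set.indicator_of_notMem
          intro hmem
          exact hu hmem.2.2.1
        rw [lintegral_congr this, lintegral_zero]
    · have : ∀ d : ℝ, (U1 c ε).indicator
          (fun p => ENNReal.ofReal (|p.2.2.2 - p.2.2.1| - c * |p.2.1 - p.1|)⁻¹) (a, b, u, d) = 0 := by
        intro d
        apply Set.indicator_of_notMem
        intro hmem
        exact hb hmem.2.1
      rw [lintegral_congr this, lintegral_zero]
      exact zero_le
  · have : ∀ d : ℝ, (U1 c ε).indicator
        (fun p => ENNReal.ofReal (|p.2.2.2 - p.2.2.1| - c * |p.2.1 - p.1|)⁻¹) (a, b, u, d) = 0 := by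
      intro d
      apply Set.indicator_of_notMem
      intro hmem
      exact ha hmem.1
    rw [lintegral_congr this, lintegral_zero]
    exact zero_le

theorem stmt_19 :
    ∃ K : ℝ, 0 < K ∧ ∀ c : ℝ, 0 ≤ c → ∀ ε : ℝ, 0 < ε → ε < 1 →
      (∫ p in U1 c ε, (|p.2.2.2 - p.2.2.1| - c * |p.2.1 - p.1|)⁻¹)
        ≤ K * (1 + Real.log (1 / ε)) := by
  refine ⟨2, two_pos, fun c hc ε hε hε1 => ?_⟩
  have hfm : Measurable (fun p : ℝ×ℝ×ℝ×ℝ => |p.2.2.2 - p.2.2.1| - c * |p.2.1 - p.1|) :=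
    ((measurable_snd.snd.snd.sub measurable_snd.snd.fst).abs).sub
      (measurable_const.mul ((measurable_snd.fst.sub measurable_fst).abs))
  have hU : MeasurableSet (U1 c ε) := by
    have heq : U1 c ε = ((Icc (0:ℝ) 1) ×ˢ ((Icc (0:ℝ) 1) ×ˢ ((Icc (0:ℝ) 1) ×ˢ (Icc (0:ℝ) 1)))) ∩
        {p : ℝ×ℝ×ℝ×ℝ | ε ≤ |p.2.2.2 - p.2.2.1| - c * |p.2.1 - p.1|} := by
      ext p
      simp only [U1, Set.mem_setOf_eq, Set.mem_inter_iff, Set.mem_prod]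
      tauto
    rw [heq]
    exact ((measurableSet_Icc.prod (measurableSet_Icc.prod
      (measurableSet_Icc.prod measurableSet_Icc)))).inter (measurableSet_le measurable_const hfm)
  set G : ℝ×ℝ×ℝ×ℝ → ENNReal := (U1 c ε).indicator
    (fun p => ENNReal.ofReal (|p.2.2.2 - p.2.2.1| - c * |p.2.1 - p.1|)⁻¹) with hG
  have hGm : Measurable G := (hfm.inv.ennreal_ofReal).indicator hU
  have h1 : (∫ p in U1 c ε, (|p.2.2.2 - p.2.2.1| - c * |p.2.1 - p.1|)⁻¹) = (∫⁻ p, G p).toReal := by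
    rw [integral_eq_lintegral_of_nonneg_ae
      (ae_restrict_of_forall_mem hU (fun p hp => inv_nonneg.mpr (le_trans hε.le hp.2.2.2.2)))
      (hfm.inv.aestronglyMeasurable), hG, lintegral_indicator hU]
  have h3 : ∫⁻ p, G p = ∫⁻ a, ∫⁻ b, ∫⁻ u, ∫⁻ d, G (a, b, u, d) := by
    rw [MeasureTheory.Measure.volume_eq_prod, lintegral_prod _ hGm.aemeasurable]
    refine lintegral_congr fun a => ?_
    rw [MeasureTheory.Measure.volume_eq_prod,
      lintegral_prod _ ((show Measurable fun q : ℝ×ℝ×ℝ => G (a, q) from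
        hGm.comp measurable_prodMk_left).aemeasurable)]
    refine lintegral_congr fun b => ?_
    rw [MeasureTheory.Measure.volume_eq_prod,
      lintegral_prod _ ((show Measurable fun r : ℝ×ℝ => G (a, b, r) from
        hGm.comp (measurable_prodMk_left.comp measurable_prodMk_left)).aemeasurable)]
  have step : ∀ x : ENNReal, ∫⁻ u : ℝ, (Icc (0:ℝ) 1).indicator (fun _ => x) u = x := by
    intro x
    rw [lintegral_indicator measurableSet_Icc, setLIntegral_const]
    simp
  have h4 : (∫⁻ a, ∫⁻ b, ∫⁻ u, ∫⁻ d, G (a, b, u, d)) ≤ ENNReal.ofReal (2 * Real.log (1/ε)) := by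
    calc (∫⁻ a, ∫⁻ b, ∫⁻ u, ∫⁻ d, G (a, b, u, d))
        ≤ ∫⁻ a, ∫⁻ b, ∫⁻ u, (Icc (0:ℝ) 1).indicator (fun _ => (Icc (0:ℝ) 1).indicator
            (fun _ => (Icc (0:ℝ) 1).indicator
              (fun _ => ENNReal.ofReal (2 * Real.log (1/ε))) a) b) u :=
          lintegral_mono fun a => lintegral_mono fun b => lintegral_mono fun u =>
            inner_bound_s19 c ε hc hε hε1 a b u
      _ = ∫⁻ a, ∫⁻ b, (Icc (0:ℝ) 1).indicator (fun _ => (Icc (0:ℝ) 1).indicator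
            (fun _ => ENNReal.ofReal (2 * Real.log (1/ε))) a) b :=
          lintegral_congr fun a => lintegral_congr fun b => step _
      _ = ∫⁻ a, (Icc (0:ℝ) 1).indicator (fun _ => ENNReal.ofReal (2 * Real.log (1/ε))) a :=
          lintegral_congr fun a => step _
      _ = ENNReal.ofReal (2 * Real.log (1/ε)) := step _
  have hlog : 0 ≤ Real.log (1/ε) := Real.log_nonneg (by rw [le_div_iff₀ hε]; linarith)
  rw [h1, h3]
  calc (∫⁻ a, ∫⁻ b, ∫⁻ u, ∫⁻ d, G (a, b, u, d)).toReal
      ≤ (ENNReal.ofReal (2 * Real.log (1/ε))).toReal :=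
        ENNReal.toReal_mono ENNReal.ofReal_ne_top h4
    _ = 2 * Real.log (1/ε) := ENNReal.toReal_ofReal (by positivity)
    _ ≤ 2 * (1 + Real.log (1/ε)) := by linarith
end
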